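/- arXiv:1902.01794 — 6 statements merged into one kernel-verified Lean document; each statement's English description precedes it below -/
import Mathlib

section
/- For all integers m, n ≥ 1, in the Lie ring L = L_{m,n}(ℤ) the derived subalgebra [L, L] and the center Z(L) = {v ∈ L : [v, L] = 0} both equal the ℤ-span of {z₁,…,zₙ}; in particular [[L, L], L] = 0 and [L, L] ≠ 0, so L is nilpotent of class exactly 2. -/
open scoped BigOperators

/-- `e(m,n) = binom(n+m-2, n-1)`. -/
def eN (m n : ℕ) : ℕ := (n + m - 2).choose (n - 1)

/-- `f(m,n) = binom(n+m-1, n-1)`. -/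
def fN (m n : ℕ) : ℕ := (n + m - 1).choose (n - 1)

/-- `d(m,n) = e(m,n) + f(m,n)`. -/
def dN (m n : ℕ) : ℕ := eN m n + fN m n

/-- `h(m,n) = d(m,n) + n`. -/
def hN (m n : ℕ) : ℕ := dN m n + n

/-- `E(m,n)`, the set of `n`-tuples of nonnegative integers with sum `m-1`. -/
abbrev EIdx (m n : ℕ) := {v : Fin n → ℕ // ∑ i, v i = m - 1}

/-- `F(m,n)`, the set of `n`-tuples of nonnegative integers with sum `m`. -/
abbrev FIdx (m n : ℕ) := {v : Fin n → ℕ // ∑ i, v i = m}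

/-- Index set for the basis `{x_e} ∪ {y_f} ∪ {z_1,…,z_n}` of `L_{m,n}`. -/
abbrev BIdx (m n : ℕ) := EIdx m n ⊕ FIdx m n ⊕ Fin n

/-- `L_{m,n}(R)`: the free `R`-module on the basis `{x_e} ∪ {y_f} ∪ {z_i}`. -/
abbrev Lmn (m n : ℕ) (R : Type*) [CommRing R] := BIdx m n →₀ R

/-- The bracket of two basis elements of `L_{m,n}(R)`:
`[x_e, y_f] = z_i` if `f - e` is the `i`-th standard basis vector, `0` otherwise;
`[y_f, x_e] = -[x_e, y_f]`; all other brackets of basis elements vanish. -/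
noncomputable def brktB {m n : ℕ} {R : Type*} [CommRing R] :
    BIdx m n → BIdx m n → Lmn m n R
  | Sum.inl e, Sum.inr (Sum.inl f) =>
      ∑ i : Fin n,
        if f.1 = e.1 + Pi.single i 1 then Finsupp.single (Sum.inr (Sum.inr i)) 1 else 0
  | Sum.inr (Sum.inl f), Sum.inl e =>
      -∑ i : Fin n,
        if f.1 = e.1 + Pi.single i 1 then Finsupp.single (Sum.inr (Sum.inr i)) 1 else 0
  | _, _ => 0

/-- The `R`-bilinear bracket on `L_{m,n}(R)`, extending `brktB` bilinearly. -/
noncomputable def brk {m n : ℕ} {R : Type*} [CommRing R] (v w : Lmn m n R) : Lmn m n R :=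
  v.sum fun a c => w.sum fun b c' => (c * c') • brktB a b


/-- The central basis elements `z_i` of `L_{m,n}(ℤ)`. -/
noncomputable def zB (m n : ℕ) (i : Fin n) : Lmn m n ℤ :=
  Finsupp.single (Sum.inr (Sum.inr i)) 1

section Aux
variable {m n : ℕ}

lemma brktB_z (i : Fin n) (b : BIdx m n) : (brktB (Sum.inr (Sum.inr i)) b : Lmn m n ℤ) = 0 := by
  rcases b with e | f | j <;> rfl

lemma brk_zero_left (w : Lmn m n ℤ) : brk 0 w = 0 := by
  simp [brk]

lemma brk_add_left (u v w : Lmn m n ℤ) : brk (u + v) w = brk u w + brk v w := by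
  unfold brk
  rw [Finsupp.sum_add_index']
  · intro a; simp
  · intro a c1 c2; rw [← Finsupp.sum_add]; congr 1; funext b c'
    rw [add_mul, add_smul]

lemma brk_smul_left (r : ℤ) (v w : Lmn m n ℤ) : brk (r • v) w = r • brk v w := by
  unfold brk
  rw [Finsupp.sum_smul_index, Finsupp.smul_sum]
  · congr 1; funext a c
    rw [Finsupp.smul_sum]; congr 1; funext b c'
    rw [mul_assoc, mul_smul]
  · intro a; simp

lemma brk_single_single (a b : BIdx m n) (c c' : ℤ) :
    brk (Finsupp.single a c) (Finsupp.single b c') = (c * c') • (brktB a b : Lmn m n ℤ) := by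
  unfold brk
  rw [Finsupp.sum_single_index, Finsupp.sum_single_index]
  · simp
  · simp [Finsupp.sum]

lemma brk_single_left (a : BIdx m n) (c : ℤ) (w : Lmn m n ℤ) :
    brk (Finsupp.single a c) w = w.sum fun b c' => (c * c') • (brktB a b : Lmn m n ℤ) := by
  unfold brk
  rw [Finsupp.sum_single_index]
  simp [Finsupp.sum]

lemma brk_z_left (i : Fin n) (w : Lmn m n ℤ) : brk (zB m n i) w = 0 := by
  rw [zB, brk_single_left]
  simp [brktB_z]

lemma sum_delta (v : Lmn m n ℤ) (a0 : BIdx m n) :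
    (v.sum fun a c => if a = a0 then c else 0) = v a0 := by
  classical
  rw [Finsupp.sum, Finset.sum_ite_eq' v.support a0 (fun a => v a)]
  split_ifs with h
  · rfl
  · exact (Finsupp.notMem_support_iff.mp h).symm

end Aux

section Aux2
variable {m n : ℕ}

lemma psingle_inj {i j : Fin n} (h : (Pi.single i 1 : Fin n → ℕ) = Pi.single j 1) : i = j := by
  by_contra hne
  have := congrFun h i
  simp [Pi.single_apply, hne] at this

lemma brktB_xy (e : EIdx m n) (f : FIdx m n) (i : Fin n)
    (hf : f.1 = e.1 + Pi.single i 1) :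
    (brktB (Sum.inl e) (Sum.inr (Sum.inl f)) : Lmn m n ℤ) = zB m n i := by
  show (∑ j : Fin n, if f.1 = e.1 + Pi.single j 1
      then Finsupp.single (Sum.inr (Sum.inr j)) 1 else 0) = zB m n i
  rw [Finset.sum_eq_single i]
  · rw [if_pos hf]; rfl
  · intro j _ hj
    rw [if_neg]
    intro hc
    rw [hf, add_right_inj] at hc
    exact hj (psingle_inj hc).symm
  · intro h; exact absurd (Finset.mem_univ i) h

lemma brktB_y_coeff (a : BIdx m n) (e : EIdx m n) (f : FIdx m n) (i : Fin n)
    (hf : f.1 = e.1 + Pi.single i 1) :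
    (brktB a (Sum.inr (Sum.inl f)) : Lmn m n ℤ) (Sum.inr (Sum.inr i))
      = if a = Sum.inl e then 1 else 0 := by
  classical
  rcases a with e' | f' | j
  · show ((∑ j : Fin n, if f.1 = e'.1 + Pi.single j 1
      then (Finsupp.single (Sum.inr (Sum.inr j)) 1 : Lmn m n ℤ) else 0)) (Sum.inr (Sum.inr i)) = _
    rw [Finset.sum_apply']
    by_cases he : e' = e
    · subst he
      rw [if_pos rfl, Finset.sum_eq_single i]
      · rw [if_pos hf, Finsupp.single_eq_same]
      · intro j _ hj
        rw [if_neg, Finsupp.coe_zero, Pi.zero_apply]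
        intro hc
        rw [hf, add_right_inj] at hc
        exact hj (psingle_inj hc).symm
      · intro h; exact absurd (Finset.mem_univ i) h
    · rw [if_neg (by simpa using he)]
      apply Finset.sum_eq_zero
      intro j _
      split_ifs with hc
      · by_cases hji : j = i
        · subst hji
          exact absurd (Subtype.ext (add_right_cancel (hf ▸ hc.symm))) he
        · exact Finsupp.single_eq_of_ne' (by simp [hji])
      · rfl
  · rfl
  · rfl

lemma brktB_x_coeff (a : BIdx m n) (e : EIdx m n) (f : FIdx m n) (i : Fin n)
    (hf : f.1 = e.1 + Pi.single i 1) :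
    (brktB a (Sum.inl e) : Lmn m n ℤ) (Sum.inr (Sum.inr i))
      = if a = Sum.inr (Sum.inl f) then -1 else 0 := by
  classical
  rcases a with e' | f' | j
  · rfl
  · show (-(∑ j : Fin n, if f'.1 = e.1 + Pi.single j 1
      then (Finsupp.single (Sum.inr (Sum.inr j)) 1 : Lmn m n ℤ) else 0)) (Sum.inr (Sum.inr i)) = _
    rw [Finsupp.neg_apply, Finset.sum_apply']
    by_cases hff : f' = f
    · subst hff
      rw [if_pos rfl, Finset.sum_eq_single i]
      · rw [if_pos hf, Finsupp.single_eq_same]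
      · intro j _ hj
        rw [if_neg, Finsupp.coe_zero, Pi.zero_apply]
        intro hc
        rw [hf, add_right_inj] at hc
        exact hj (psingle_inj hc).symm
      · intro h; exact absurd (Finset.mem_univ i) h
    · rw [if_neg (by simpa using hff), neg_eq_zero]
      apply Finset.sum_eq_zero
      intro j _
      split_ifs with hc
      · by_cases hji : j = i
        · subst hji
          exact absurd (Subtype.ext (hc.trans hf.symm)) hff
        · exact Finsupp.single_eq_of_ne' (by simp [hji])
      · rfl
  · rfl

end Aux2

section Aux3
variable {m n : ℕ}

lemma brk_single_right (v : Lmn m n ℤ) (b : BIdx m n) :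
    brk v (Finsupp.single b (1:ℤ)) = v.sum fun a c => c • (brktB a b : Lmn m n ℤ) := by
  unfold brk
  congr 1; funext a c
  rw [Finsupp.sum_single_index]
  · rw [mul_one]
  · simp

lemma brktB_mem_span (a b : BIdx m n) :
    (brktB a b : Lmn m n ℤ) ∈ Submodule.span ℤ (Set.range (zB m n)) := by
  have key : ∀ (e : EIdx m n) (f : FIdx m n),
      (∑ i : Fin n, if f.1 = e.1 + Pi.single i 1
        then (Finsupp.single (Sum.inr (Sum.inr i)) 1 : Lmn m n ℤ) else 0)
        ∈ Submodule.span ℤ (Set.range (zB m n)) := by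
    intro e f
    apply Submodule.sum_mem
    intro i _
    split_ifs
    · exact Submodule.subset_span (Set.mem_range_self i)
    · exact Submodule.zero_mem _
  rcases a with e | f | j <;> rcases b with e' | f' | j' <;>
    first
    | exact Submodule.zero_mem _
    | exact key e f'
    | exact Submodule.neg_mem _ (key e' f)

lemma brk_mem_span (u v : Lmn m n ℤ) : brk u v ∈ Submodule.span ℤ (Set.range (zB m n)) := by
  unfold brk
  apply Submodule.sum_mem; intro a _
  apply Submodule.sum_mem; intro b _
  exact Submodule.smul_mem _ _ (brktB_mem_span a b)

lemma span_brk_left {v : Lmn m n ℤ} (hv : v ∈ Submodule.span ℤ (Set.range (zB m n)))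
    (w : Lmn m n ℤ) : brk v w = 0 := by
  refine Submodule.span_induction ?_ ?_ ?_ ?_ hv
  · rintro x ⟨i, rfl⟩; exact brk_z_left i w
  · exact brk_zero_left w
  · intro x y _ _ hx hy; rw [brk_add_left, hx, hy, add_zero]
  · intro r x _ hx; rw [brk_smul_left, hx, smul_zero]

lemma mem_span_of_coeffs (v : Lmn m n ℤ)
    (hx : ∀ e : EIdx m n, v (Sum.inl e) = 0)
    (hy : ∀ f : FIdx m n, v (Sum.inr (Sum.inl f)) = 0) :
    v ∈ Submodule.span ℤ (Set.range (zB m n)) := by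
  rw [← Finsupp.sum_single v, Finsupp.sum]
  apply Submodule.sum_mem
  intro a _
  rcases a with e | f | i
  · rw [hx e, Finsupp.single_zero]; exact Submodule.zero_mem _
  · rw [hy f, Finsupp.single_zero]; exact Submodule.zero_mem _
  · have : Finsupp.single (Sum.inr (Sum.inr i) : BIdx m n) (v (Sum.inr (Sum.inr i)))
        = v (Sum.inr (Sum.inr i)) • zB m n i := by
      rw [zB, Finsupp.smul_single, smul_eq_mul, mul_one]
    rw [this]
    exact Submodule.smul_mem _ _ (Submodule.subset_span (Set.mem_range_self i))

def eZero (m n : ℕ) (hn : 1 ≤ n) : EIdx m n := ⟨Pi.single ⟨0, hn⟩ (m-1), by simp⟩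

def fOf (hm : 1 ≤ m) (e : EIdx m n) (i : Fin n) : FIdx m n :=
  ⟨e.1 + Pi.single i 1, by
    have h := e.2
    simp only [Pi.add_apply, Finset.sum_add_distrib, h]
    simp [Pi.single_apply]
    omega⟩

lemma exists_decomp (hm : 1 ≤ m) (f : FIdx m n) :
    ∃ (e : EIdx m n) (i : Fin n), f.1 = e.1 + Pi.single i 1 := by
  have hsum : ∑ j, f.1 j ≠ 0 := by rw [f.2]; omega
  obtain ⟨i, -, hi⟩ := Finset.exists_ne_zero_of_sum_ne_zero hsum
  set g : Fin n → ℕ := fun j => f.1 j - (Pi.single i 1 : Fin n → ℕ) j with hg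
  have hf : f.1 = g + Pi.single i 1 := by
    funext j
    simp only [hg, Pi.add_apply, Pi.single_apply]
    split_ifs with h
    · subst h; omega
    · omega
  have hgsum : ∑ j, g j = m - 1 := by
    have hps : ∑ j, (Pi.single i 1 : Fin n → ℕ) j = 1 := by simp [Pi.single_apply]
    have h2 : ∑ j, f.1 j = ∑ j, g j + 1 := by
      rw [hf]
      simp only [Pi.add_apply, Finset.sum_add_distrib, hps]
    have h3 := f.2
    omega
  exact ⟨⟨g, hgsum⟩, i, hf⟩

lemma coeff_x_zero (hm : 1 ≤ m) {v : Lmn m n ℤ}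
    (hv : ∀ w, brk v w = 0) (e : EIdx m n) (i : Fin n) : v (Sum.inl e) = 0 := by
  set f := fOf hm e i with hfdef
  have h : brk v (Finsupp.single (Sum.inr (Sum.inl f)) 1) (Sum.inr (Sum.inr i)) = 0 := by
    rw [hv]; rfl
  rw [brk_single_right, Finsupp.sum_apply] at h
  have key : (v.sum fun a c => if a = Sum.inl e then c else 0)
      = v.sum fun a c => (c • (brktB a (Sum.inr (Sum.inl f)) : Lmn m n ℤ)) (Sum.inr (Sum.inr i)) := by
    apply Finsupp.sum_congr
    intro a _
    rw [Finsupp.smul_apply, brktB_y_coeff a e f i rfl, smul_eq_mul]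
    split_ifs <;> ring
  exact (sum_delta v (Sum.inl e)).symm.trans (key.trans h)

lemma coeff_y_zero (hm : 1 ≤ m) {v : Lmn m n ℤ}
    (hv : ∀ w, brk v w = 0) (f : FIdx m n) : v (Sum.inr (Sum.inl f)) = 0 := by
  obtain ⟨e, i, hf⟩ := exists_decomp hm f
  have h : brk v (Finsupp.single (Sum.inl e) 1) (Sum.inr (Sum.inr i)) = 0 := by
    rw [hv]; rfl
  rw [brk_single_right, Finsupp.sum_apply] at h
  have key : (v.sum fun a c => -(if a = Sum.inr (Sum.inl f) then c else 0))
      = v.sum fun a c => (c • (brktB a (Sum.inl e) : Lmn m n ℤ)) (Sum.inr (Sum.inr i)) := by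
    apply Finsupp.sum_congr
    intro a _
    rw [Finsupp.smul_apply, brktB_x_coeff a e f i hf, smul_eq_mul]
    split_ifs <;> ring
  have hneg : (v.sum fun a c => -(if a = Sum.inr (Sum.inl f) then c else 0))
      = -(v.sum fun a c => if a = Sum.inr (Sum.inl f) then c else 0) := by
    rw [Finsupp.sum, Finsupp.sum]
    rw [Finset.sum_neg_distrib]
  have h3 := hneg.symm.trans (key.trans h)
  have h4 := neg_eq_zero.mp h3
  rw [sum_delta] at h4
  exact h4

lemma zB_eq_brk (hm : 1 ≤ m) (hn : 1 ≤ n) (i : Fin n) :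
    zB m n i = brk (Finsupp.single (Sum.inl (eZero m n hn)) 1)
      (Finsupp.single (Sum.inr (Sum.inl (fOf hm (eZero m n hn) i))) 1) := by
  rw [brk_single_single, one_mul, one_smul, brktB_xy (eZero m n hn) _ i rfl]

end Aux3

theorem stmt1 (m n : ℕ) (hm : 1 ≤ m) (hn : 1 ≤ n) :
    Submodule.span ℤ {x : Lmn m n ℤ | ∃ u v : Lmn m n ℤ, x = brk u v}
      = Submodule.span ℤ (Set.range (zB m n)) ∧
    {v : Lmn m n ℤ | ∀ w : Lmn m n ℤ, brk v w = 0}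
      = (Submodule.span ℤ (Set.range (zB m n)) : Set (Lmn m n ℤ)) ∧
    (∀ u v w : Lmn m n ℤ, brk (brk u v) w = 0) ∧
    (∃ u v : Lmn m n ℤ, brk u v ≠ 0) := by
  have i0 : Fin n := ⟨0, hn⟩
  refine ⟨?_, ?_, ?_, ?_⟩
  · apply le_antisymm
    · rw [Submodule.span_le]
      rintro x ⟨u, v, rfl⟩
      exact brk_mem_span u v
    · rw [Submodule.span_le]
      rintro x ⟨i, rfl⟩
      exact Submodule.subset_span ⟨_, _, zB_eq_brk hm hn i⟩
  · ext v
    constructor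
    · intro hv
      exact mem_span_of_coeffs v (fun e => coeff_x_zero hm hv e i0) (coeff_y_zero hm hv)
    · intro hv w
      exact span_brk_left hv w
  · intro u v w
    exact span_brk_left (brk_mem_span u v) w
  · refine ⟨Finsupp.single (Sum.inl (eZero m n hn)) 1,
      Finsupp.single (Sum.inr (Sum.inl (fOf hm (eZero m n hn) i0))) 1, ?_⟩
    rw [← zB_eq_brk hm hn i0]
    simp [zB, Finsupp.single_eq_zero]
end

section
/- Let m, n ≥ 1 be integers, let 𝔬 be a discrete valuation ring with maximal ideal 𝔭, let N ≥ 1 and R = 𝔬/𝔭^N, and let y ∈ Rⁿ be a vector at least one of whose coordinates is a unit of R. Then there exist U, V ∈ GL_{d(m,n)}(R) such that U·M_{m,n}(y)·V equals the d(m,n) × d(m,n) matrix whose upper-left 2e(m,n) × 2e(m,n) corner is the block matrix [[0, −Id_{e(m,n)}],[Id_{e(m,n)}, 0]] and all of whose other entries are 0. -/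
open scoped BigOperators

/-- Entries of the recursively defined block matrix `B_{m,n}(y)`.
`Bent n m y r c` is the `(r,c)` entry (indices `0`-based) of `B_{m,n}(y 0, …, y (n-1))`.
For `n = 1`, `B_{m,1}(Y₁)` is the `1×1` matrix `(Y₁)`.  For `n ≥ 2`, `B_{m,n}` has row
blocks `i = 1,…,m+1` of heights `e(i,n-1)` (so block `i` starts at row `e(i-1,n)`,
using `∑_{i'<i} e(i',n-1) = e(i-1,n)`), column blocks `j = 1,…,m` of widths `e(j,n-1)`
(block `j` starting at column `e(j-1,n)`); the diagonal blocks `(j,j)` are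
`Y₁·Id_{e(j,n-1)}`, the subdiagonal blocks `(j+1,j)` are `B_{j,n-1}(Y₂,…,Yₙ)`, and all
other blocks vanish. -/
def Bent {R : Type*} [CommRing R] : ℕ → ℕ → (ℕ → R) → ℕ → ℕ → R
  | 0, _, _, _, _ => 0
  | 1, _, y, r, c => if r = 0 ∧ c = 0 then y 0 else 0
  | n + 2, m, y, r, c =>
      -- `i`, `j` are the (1-based) indices of the row resp. column block containing
      -- row `r` resp. column `c`.
      let i := ((Finset.range (m + 2)).filter fun k => eN k (n + 2) ≤ r).card
      let j := ((Finset.range (m + 1)).filter fun k => eN k (n + 2) ≤ c).card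
      if i = j then
        (if r - eN (i - 1) (n + 2) = c - eN (j - 1) (n + 2) then y 0 else 0)
      else if i = j + 1 then
        Bent (n + 1) j (fun k => y (k + 1)) (r - eN j (n + 2)) (c - eN (j - 1) (n + 2))
      else 0

/-- Extend `y : Fin n → R` to `ℕ → R` by zero. -/
def pad {R : Type*} [Zero R] {n : ℕ} (y : Fin n → R) : ℕ → R :=
  fun k => if h : k < n then y ⟨k, h⟩ else 0

/-- The `f(m,n) × e(m,n)` matrix `B_{m,n}(y)` over `R`. -/
def Bmat {R : Type*} [CommRing R] (m n : ℕ) (y : Fin n → R) :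
    Matrix (Fin (fN m n)) (Fin (eN m n)) R :=
  Matrix.of fun r c => Bent n m (pad y) (r : ℕ) (c : ℕ)

/-- The `d(m,n) × d(m,n)` commutator matrix
`M_{m,n}(y) = [[0, -B_{m,n}(y)ᵀ], [B_{m,n}(y), 0]]`, the diagonal zero blocks having
sizes `e(m,n)` and `f(m,n)`. -/
def Mmat {R : Type*} [CommRing R] (m n : ℕ) (y : Fin n → R) :
    Matrix (Fin (dN m n)) (Fin (dN m n)) R :=
  Matrix.of fun i j =>
    if (i : ℕ) < eN m n ∧ eN m n ≤ (j : ℕ) then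
      -(Bent n m (pad y) ((j : ℕ) - eN m n) (i : ℕ))
    else if eN m n ≤ (i : ℕ) ∧ (j : ℕ) < eN m n then
      Bent n m (pad y) ((i : ℕ) - eN m n) ((j : ℕ))
    else 0

section Aux

lemma eN_n2 (k n : ℕ) : eN k (n+2) = (n + k).choose (n+1) := by
  unfold eN; congr 1 <;> omega

lemma eN_n1 (k n : ℕ) : eN k (n+1) = (n + k - 1).choose n := by
  unfold eN; congr 1 <;> omega

lemma eN_strictMono (n : ℕ) : StrictMono fun k => eN k (n+2) := by
  apply strictMono_nat_of_lt_succ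
  intro k
  simp only [eN_n2]
  have h1 : n + (k+1) = (n + k) + 1 := by ring
  rw [h1, Nat.choose_succ_succ']
  have h2 : 0 < (n + k).choose n := Nat.choose_pos (by omega)
  omega

lemma eN_zero (n : ℕ) : eN 0 (n+2) = 0 := by
  rw [eN_n2]
  exact Nat.choose_eq_zero_of_lt (by omega)

lemma eN_succ (j n : ℕ) : eN (j+1) (n+2) = eN j (n+2) + eN (j+1) (n+1) := by
  rw [eN_n2, eN_n2, eN_n1]
  have h1 : n + (j+1) = (n + j) + 1 := by ring
  have h2 : (n + j) + 1 - 1 = n + j := by omega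
  rw [h1, h2, Nat.choose_succ_succ', Nat.add_comm]

lemma fN_n2 (m n : ℕ) : fN m (n+2) = eN (m+1) (n+2) := by
  rw [eN_n2]; unfold fN; congr 1 <;> omega

lemma fN_n1 (j n : ℕ) : fN j (n+1) = eN (j+1) (n+1) := by
  rw [eN_n1]; unfold fN; congr 1 <;> omega

lemma eN_one (m : ℕ) : eN m 1 = 1 := by
  unfold eN; rw [show (1:ℕ) - 1 = 0 from rfl, Nat.choose_zero_right]

lemma fN_one (m : ℕ) : fN m 1 = 1 := by
  unfold fN; rw [show (1:ℕ) - 1 = 0 from rfl, Nat.choose_zero_right]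

lemma eN_le_fN (m n : ℕ) : eN m n ≤ fN m n :=
  Nat.choose_le_choose _ (by omega)

lemma card_block {n : ℕ} (M a r : ℕ) (h1 : eN a (n+2) ≤ r) (h2 : r < eN (a+1) (n+2))
    (haM : a + 1 ≤ M) :
    ((Finset.range M).filter fun k => eN k (n+2) ≤ r).card = a + 1 := by
  have hsm := eN_strictMono n
  have heq : ((Finset.range M).filter fun k => eN k (n+2) ≤ r) = Finset.range (a+1) := by
    ext k
    simp only [Finset.mem_filter, Finset.mem_range]
    constructor
    · rintro ⟨hkM, hk⟩
      by_contra h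
      push_neg at h
      have := hsm.monotone (show a+1 ≤ k by omega)
      omega
    · intro hk
      have := hsm.monotone (show k ≤ a by omega)
      exact ⟨by omega, by omega⟩
  rw [heq, Finset.card_range]

lemma exists_block {n : ℕ} (M r : ℕ) (h : r < eN M (n+2)) :
    ∃ a, a < M ∧ eN a (n+2) ≤ r ∧ r < eN (a+1) (n+2) := by
  induction M with
  | zero => rw [eN_zero] at h; omega
  | succ M ih =>
    by_cases h' : r < eN M (n+2)
    · obtain ⟨a, h1, h2, h3⟩ := ih h'; exact ⟨a, by omega, h2, h3⟩
    · exact ⟨M, by omega, by omega, h⟩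

lemma block_unique {n a b r : ℕ} (h1 : eN a (n+2) ≤ r) (h2 : r < eN (a+1) (n+2))
    (h3 : eN b (n+2) ≤ r) (h4 : r < eN (b+1) (n+2)) : a = b := by
  have hsm := eN_strictMono n
  by_contra h
  rcases Nat.lt_or_ge a b with hab | hab
  · have := hsm.monotone (show a+1 ≤ b by omega); omega
  · have := hsm.monotone (show b+1 ≤ a by omega); omega

lemma bent_eq {R : Type*} [CommRing R] (n m : ℕ) (y : ℕ → R) (r c a b : ℕ)
    (har1 : eN a (n+2) ≤ r) (har2 : r < eN (a+1) (n+2)) (ha : a ≤ m)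
    (hbc1 : eN b (n+2) ≤ c) (hbc2 : c < eN (b+1) (n+2)) (hb : b < m) :
    Bent (n+2) m y r c =
      if a = b then (if r - eN a (n+2) = c - eN b (n+2) then y 0 else 0)
      else if a = b + 1 then
        Bent (n+1) (b+1) (fun k => y (k+1)) (r - eN (b+1) (n+2)) (c - eN b (n+2))
      else 0 := by
  have hi := card_block (m+2) a r har1 har2 (by omega)
  have hj := card_block (m+1) b c hbc1 hbc2 (by omega)
  simp only [Bent, hi, hj, Nat.add_sub_cancel]
  by_cases hab : a = b
  · simp [hab]
  · rw [if_neg (by omega), if_neg hab]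
    by_cases hab2 : a = b + 1
    · rw [if_pos (by omega), if_pos hab2]
    · rw [if_neg (by omega), if_neg hab2]

end Aux
theorem claimD {R : Type*} [CommRing R] :
    ∀ n : ℕ, ∀ m : ℕ, 1 ≤ m → ∀ y : ℕ → R, (∃ i, i < n + 1 ∧ IsUnit (y i)) →
      ∃ φ : Fin (eN m (n+1)) → Fin (fN m (n+1)), Function.Injective φ ∧
        IsUnit (Matrix.det (Matrix.of fun r c : Fin (eN m (n+1)) =>
          Bent (n+1) m y (φ r : ℕ) (c : ℕ))) := by
  intro n
  induction n with
  | zero =>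
    intro m hm y hy
    obtain ⟨i, hi, hu⟩ := hy
    interval_cases i
    refine ⟨fun _ => ⟨0, by rw [fN_one]; omega⟩, ?_, ?_⟩
    · intro a b _
      haveI : Subsingleton (Fin (eN m 1)) := by rw [eN_one]; infer_instance
      exact Subsingleton.elim a b
    · haveI : Unique (Fin (eN m 1)) := by rw [eN_one]; infer_instance
      rw [Matrix.det_unique]
      have hc : ((default : Fin (eN m 1)) : ℕ) = 0 := by
        have h1 := (default : Fin (eN m 1)).isLt
        have h2 : eN m 1 = 1 := eN_one m
        omega
      simpa [Bent, hc] using hu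
  | succ n ih =>
    intro m hm y hy
    by_cases h0 : IsUnit (y 0)
    · -- y 0 is a unit: take the top square block, lower triangular
      have hef : eN m (n+2) ≤ fN m (n+2) := eN_le_fN m (n+2)
      refine ⟨Fin.castLE hef, Fin.castLE_injective hef, ?_⟩
      set A : Matrix (Fin (eN m (n+2))) (Fin (eN m (n+2))) R :=
        Matrix.of fun r c : Fin (eN m (n+2)) =>
          Bent (n+2) m y ((Fin.castLE hef r : Fin (fN m (n+2))) : ℕ) (c : ℕ) with hA
      have hBT : A.BlockTriangular OrderDual.toDual := by
        intro r c hrc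
        have hrc' : (r : ℕ) < (c : ℕ) := hrc
        obtain ⟨a, ham, ha1, ha2⟩ := exists_block m (r : ℕ) r.isLt
        obtain ⟨b, hbm, hb1, hb2⟩ := exists_block m (c : ℕ) c.isLt
        have : A r c = Bent (n+2) m y (r : ℕ) (c : ℕ) := rfl
        rw [this, bent_eq n m y _ _ a b ha1 ha2 (by omega) hb1 hb2 hbm]
        by_cases hab : a = b
        · subst hab
          rw [if_pos rfl]
          have hne : ¬ ((r:ℕ) - eN a (n+2) = (c:ℕ) - eN a (n+2)) := by omega
          rw [if_neg hne]
        · rw [if_neg hab]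
          by_cases hab2 : a = b + 1
          · exfalso; subst hab2; omega
          · rw [if_neg hab2]
      rw [Matrix.det_of_lowerTriangular A hBT]
      have hdiag : ∀ r : Fin (eN m (n+2)), A r r = y 0 := by
        intro r
        obtain ⟨a, ham, ha1, ha2⟩ := exists_block m (r : ℕ) r.isLt
        have h1 : A r r = Bent (n+2) m y (r : ℕ) (r : ℕ) := rfl
        rw [h1, bent_eq n m y _ _ a a ha1 ha2 (by omega) ha1 ha2 ham, if_pos rfl, if_pos rfl]
      rw [Finset.prod_congr rfl fun r _ => hdiag r, Finset.prod_const]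
      exact h0.pow _
    · -- y 0 is not a unit: use the subdiagonal blocks
      obtain ⟨i0, hi0n, hi0u⟩ := hy
      have hi0 : i0 ≠ 0 := fun h => h0 (h ▸ hi0u)
      have hy' : ∃ i, i < n + 1 ∧ IsUnit ((fun k => y (k+1)) i) := by
        refine ⟨i0 - 1, by omega, ?_⟩
        have h1 : i0 - 1 + 1 = i0 := by omega
        simpa [h1] using hi0u
      choose Φ hΦinj hΦdet using fun b : ℕ => ih (b+1) (by omega) (fun k => y (k+1)) hy'
      choose blk hblkm hblk1 hblk2 using fun c : Fin (eN m (n+2)) => exists_block m (c:ℕ) c.isLt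
      set F : ℕ → ℕ → ℕ :=
        fun b t => if h : t < eN (b+1) (n+1) then (Φ b ⟨t, h⟩ : ℕ) else 0 with hFdef
      have hFval : ∀ b t (h : t < eN (b+1) (n+1)), F b t = (Φ b ⟨t, h⟩ : ℕ) := by
        intro b t h; simp only [hFdef]; rw [dif_pos h]
      have hFlt : ∀ b t, t < eN (b+1) (n+1) → F b t < fN (b+1) (n+1) := by
        intro b t h; rw [hFval b t h]; exact (Φ b ⟨t, h⟩).isLt
      have hFinj : ∀ b t t', t < eN (b+1) (n+1) → t' < eN (b+1) (n+1) →
          F b t = F b t' → t = t' := by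
        intro b t t' h h' heq
        rw [hFval b t h, hFval b t' h'] at heq
        have h2 : Φ b ⟨t, h⟩ = Φ b ⟨t', h'⟩ := Fin.val_injective heq
        exact congrArg Fin.val (hΦinj b h2)
      have hofflt : ∀ c : Fin (eN m (n+2)),
          (c:ℕ) - eN (blk c) (n+2) < eN (blk c + 1) (n+1) := by
        intro c
        have h1 := hblk1 c; have h2 := hblk2 c
        have h3 := eN_succ (blk c) n
        omega
      have hφlt : ∀ c : Fin (eN m (n+2)),
          eN (blk c + 1) (n+2) + F (blk c) ((c:ℕ) - eN (blk c) (n+2)) < fN m (n+2) := by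
        intro c
        have h1 := hFlt (blk c) _ (hofflt c)
        have h2 : fN (blk c + 1) (n+1) = eN (blk c + 2) (n+1) := fN_n1 _ n
        have h3 : eN (blk c + 2) (n+2) = eN (blk c + 1) (n+2) + eN (blk c + 2) (n+1) :=
          eN_succ (blk c + 1) n
        have h4 : eN (blk c + 2) (n+2) ≤ eN (m+1) (n+2) :=
          (eN_strictMono n).monotone (by have := hblkm c; omega)
        have h5 : fN m (n+2) = eN (m+1) (n+2) := fN_n2 m n
        omega
      set φ : Fin (eN m (n+2)) → Fin (fN m (n+2)) :=
        fun c => ⟨eN (blk c + 1) (n+2) + F (blk c) ((c:ℕ) - eN (blk c) (n+2)), hφlt c⟩ with hφdef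
      have hφval : ∀ c, (φ c : ℕ) =
          eN (blk c + 1) (n+2) + F (blk c) ((c:ℕ) - eN (blk c) (n+2)) := by
        intro c; simp only [hφdef]
      have hrow2 : ∀ c, (φ c : ℕ) < eN (blk c + 2) (n+2) := by
        intro c
        have h1 := hFlt (blk c) _ (hofflt c)
        have h2 : fN (blk c + 1) (n+1) = eN (blk c + 2) (n+1) := fN_n1 _ n
        have h3 : eN (blk c + 2) (n+2) = eN (blk c + 1) (n+2) + eN (blk c + 2) (n+1) :=
          eN_succ (blk c + 1) n
        rw [hφval c]
        omega
      have hrow1 : ∀ c, eN (blk c + 1) (n+2) ≤ (φ c : ℕ) := by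
        intro c; rw [hφval c]; exact Nat.le_add_right _ _
      refine ⟨φ, ?_, ?_⟩
      · intro c c' h
        have hv : (φ c : ℕ) = (φ c' : ℕ) := by rw [h]
        have hb : blk c + 1 = blk c' + 1 := by
          apply block_unique (hrow1 c) (hrow2 c)
          · rw [hv]; exact hrow1 c'
          · rw [hv]; exact hrow2 c'
        have hb' : blk c = blk c' := by omega
        have h1 := hφval c
        have h2 := hφval c'
        rw [hb'] at h1
        have hoc := hofflt c
        rw [hb'] at hoc
        have ht := hFinj (blk c') _ _ hoc (hofflt c') (by omega)
        have h3 := hblk1 c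
        rw [hb'] at h3
        have h4 := hblk1 c'
        apply Fin.ext
        omega
      · set A : Matrix (Fin (eN m (n+2))) (Fin (eN m (n+2))) R :=
          Matrix.of (fun r c : Fin (eN m (n+2)) =>
            Bent (n+2) m y ((φ r : ℕ)) (c : ℕ)) with hA
        have hBT : A.BlockTriangular (fun c => blk c) := by
          intro r c hrc
          have h1 : A r c = Bent (n+2) m y (φ r : ℕ) (c : ℕ) := rfl
          rw [h1, bent_eq n m y _ _ (blk r + 1) (blk c) (hrow1 r) (hrow2 r)
            (by have := hblkm r; omega) (hblk1 c) (hblk2 c) (hblkm c)]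
          have hne1 : ¬ (blk r + 1 = blk c) := by
            have : blk c < blk r := hrc; omega
          have hne2 : ¬ (blk r + 1 = blk c + 1) := by
            have : blk c < blk r := hrc; omega
          rw [if_neg hne1, if_neg hne2]
        rw [hBT.det]
        apply Finset.prod_induction _ IsUnit (fun u v hu hv => hu.mul hv) isUnit_one
        intro a ha
        obtain ⟨c₀, _, hc₀⟩ := Finset.mem_image.mp ha
        have ham : a < m := hc₀ ▸ hblkm c₀
        have hlt2 : ∀ t : Fin (eN (a+1) (n+1)), eN a (n+2) + (t:ℕ) < eN m (n+2) := by
          intro t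
          have h3 := eN_succ a n
          have h4 : eN (a+1) (n+2) ≤ eN m (n+2) := (eN_strictMono n).monotone (by omega)
          have := t.isLt; omega
        have hblkinv : ∀ t : Fin (eN (a+1) (n+1)), blk ⟨eN a (n+2) + (t:ℕ), hlt2 t⟩ = a := by
          intro t
          apply block_unique (hblk1 _) (hblk2 _)
          · exact Nat.le_add_right _ _
          · have h3 := eN_succ a n
            have ht := t.isLt
            show eN a (n+2) + (t:ℕ) < eN (a+1) (n+2)
            omega
        obtain ⟨g, hg⟩ : ∃ g : {c : Fin (eN m (n+2)) // blk c = a} ≃ Fin (eN (a+1) (n+1)),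
            ∀ x : {c : Fin (eN m (n+2)) // blk c = a}, (g x : ℕ) = (x.1:ℕ) - eN a (n+2) := by
          refine ⟨⟨fun x => ⟨(x.1:ℕ) - eN a (n+2), ?_⟩,
            fun t => ⟨⟨eN a (n+2) + (t:ℕ), hlt2 t⟩, hblkinv t⟩, ?_, ?_⟩, fun x => rfl⟩
          · have h1 := hblk1 x.1; have h2 := hblk2 x.1
            have h3 := eN_succ a n
            rw [x.2] at h1 h2
            exact by omega
          · intro x
            apply Subtype.ext; apply Fin.ext
            have h1 := hblk1 x.1
            rw [x.2] at h1
            show eN a (n+2) + ((x.1:ℕ) - eN a (n+2)) = (x.1:ℕ)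
            omega
          · intro t
            apply Fin.ext
            show eN a (n+2) + (t:ℕ) - eN a (n+2) = (t:ℕ)
            omega
        have hsq : A.toSquareBlock (fun c => blk c) a =
            (Matrix.of fun r c : Fin (eN (a+1) (n+1)) =>
              Bent (n+1) (a+1) (fun k => y (k+1)) (Φ a r : ℕ) (c : ℕ)).submatrix g g := by
          ext x x'
          have hx2 := x.2; have hx'2 := x'.2
          have h1 : (A.toSquareBlock (fun c => blk c) a) x x' =
              Bent (n+2) m y (φ x.1 : ℕ) (x'.1 : ℕ) := rfl
          rw [h1, bent_eq n m y _ _ (blk x.1 + 1) (blk x'.1) (hrow1 x.1) (hrow2 x.1)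
            (by have := hblkm x.1; omega) (hblk1 x'.1) (hblk2 x'.1) (hblkm x'.1)]
          rw [if_neg (by omega : ¬ (blk (x.1) + 1 = blk (x'.1))),
            if_pos (by omega : blk (x.1) + 1 = blk (x'.1) + 1)]
          have hoff : ((x.1:ℕ)) - eN a (n+2) < eN (a+1) (n+1) := by
            have h1 := hblk1 x.1; have h2 := hblk2 x.1
            have h3 := eN_succ a n
            rw [hx2] at h1 h2
            omega
          have hΦgx : F a ((x.1:ℕ) - eN a (n+2)) = (Φ a (g x) : ℕ) := by
            have h5 := hg x
            have hfin : (⟨(x.1:ℕ) - eN a (n+2), hoff⟩ : Fin (eN (a+1) (n+1))) = g x := by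
              apply Fin.ext
              show (x.1:ℕ) - eN a (n+2) = ((g x):ℕ)
              omega
            rw [hFval a _ hoff, hfin]
          have harg : (φ x.1 : ℕ) - eN (a+1) (n+2) = F a ((x.1:ℕ) - eN a (n+2)) := by
            rw [hφval x.1, hx2]
            omega
          show _ = Bent (n+1) (a+1) (fun k => y (k+1)) ((Φ a (g x)) : ℕ) ((g x' : ℕ))
          rw [hx'2, harg, hΦgx, hg x']
        rw [hsq, Matrix.det_submatrix_equiv_self]
        exact hΦdet a
lemma exists_P {R : Type*} [CommRing R] {e f : ℕ} (hef : e ≤ f)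
    (B : Matrix (Fin f) (Fin e) R)
    (φ : Fin e → Fin f) (hinj : Function.Injective φ)
    (hdet : IsUnit (B.submatrix φ id).det) :
    ∃ P : Matrix (Fin f) (Fin f) R, IsUnit P.det ∧
      P * B = Matrix.of (fun (r : Fin f) (c : Fin e) =>
        if (r:ℕ) = (c:ℕ) then (1:R) else 0) := by
  classical
  set g := f - e with hgdef
  have hfe : f = e + g := by omega
  have hcard : Fintype.card ↥(Set.range φ)ᶜ = g := by
    rw [Fintype.card_compl_set]
    have h1 : Fintype.card ↥(Set.range φ) = e := by
      rw [← Fintype.card_congr (Equiv.ofInjective φ hinj), Fintype.card_fin]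
    rw [h1, Fintype.card_fin]
  obtain ⟨σs, hσ⟩ : ∃ σs : (Fin e ⊕ Fin g) ≃ Fin f, ∀ i, σs (Sum.inl i) = φ i :=
    ⟨((Equiv.ofInjective φ hinj).sumCongr (Fintype.equivFinOfCardEq hcard).symm).trans
      (Equiv.sumCompl (fun x => x ∈ Set.range φ)), fun i => rfl⟩
  set A : Matrix (Fin e) (Fin e) R := B.submatrix φ id with hAdef
  set D : Matrix (Fin g) (Fin e) R :=
    B.submatrix (fun k : Fin g => σs (Sum.inr k)) id with hDdef
  set C : Matrix (Fin e ⊕ Fin g) (Fin e) R := B.submatrix σs id with hCdef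
  have hC : C = Matrix.fromRows A D := by
    ext x c
    cases x with
    | inl i => simp [hCdef, Matrix.fromRows_apply_inl, hAdef, hσ i]
    | inr k => simp [hCdef, Matrix.fromRows_apply_inr, hDdef]
  set P₀ : Matrix (Fin e ⊕ Fin g) (Fin e ⊕ Fin g) R :=
    Matrix.fromBlocks A⁻¹ 0 (-(D * A⁻¹)) 1 with hP₀def
  have hP₀C : P₀ * C = Matrix.fromRows (1 : Matrix (Fin e) (Fin e) R) 0 := by
    rw [hC, hP₀def, Matrix.fromBlocks_mul_fromRows]
    have h1 : A⁻¹ * A + (0 : Matrix (Fin e) (Fin g) R) * D = (1 : Matrix (Fin e) (Fin e) R) := by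
      rw [Matrix.zero_mul, add_zero, Matrix.nonsing_inv_mul A hdet]
    have h2 : -(D * A⁻¹) * A + (1 : Matrix (Fin g) (Fin g) R) * D = (0 : Matrix (Fin g) (Fin e) R) := by
      rw [Matrix.one_mul, Matrix.neg_mul, Matrix.mul_assoc,
        Matrix.nonsing_inv_mul A hdet, Matrix.mul_one, neg_add_cancel]
    rw [h1, h2]
  set τ : Fin f ≃ (Fin e ⊕ Fin g) := (finCongr hfe).trans finSumFinEquiv.symm with hτdef
  have hτl : ∀ (r : Fin f) (h : (r:ℕ) < e), τ r = Sum.inl ⟨(r:ℕ), h⟩ := by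
    intro r h
    have h1 : finCongr hfe r = Fin.castAdd g ⟨(r:ℕ), h⟩ := by
      apply Fin.ext; simp
    simp only [hτdef, Equiv.trans_apply, h1, finSumFinEquiv_symm_apply_castAdd]
  have hτr : ∀ (r : Fin f) (h : e ≤ (r:ℕ)), τ r = Sum.inr ⟨(r:ℕ) - e, by omega⟩ := by
    intro r h
    have h1 : finCongr hfe r = Fin.natAdd e ⟨(r:ℕ) - e, by omega⟩ := by
      apply Fin.ext; simp; omega
    simp only [hτdef, Equiv.trans_apply, h1, finSumFinEquiv_symm_apply_natAdd]
  refine ⟨P₀.submatrix τ σs.symm, ?_, ?_⟩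
  · have h1 : P₀.submatrix τ σs.symm =
        (P₀.submatrix σs.symm σs.symm).submatrix (τ.trans σs) id := by
      rw [Matrix.submatrix_submatrix]
      congr 1
      ext r
      simp
    rw [h1, Matrix.det_permute (τ.trans σs) _]
    apply IsUnit.mul
    · rcases Int.units_eq_one_or (Equiv.Perm.sign (τ.trans σs)) with h | h <;> simp [h]
    · rw [Matrix.det_submatrix_equiv_self, hP₀def, Matrix.det_fromBlocks_zero₁₂,
        Matrix.det_one, mul_one]
      exact IsUnit.of_mul_eq_one _
        (by rw [← Matrix.det_mul, Matrix.nonsing_inv_mul A hdet, Matrix.det_one])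
  · have hBC : B = C.submatrix σs.symm id := by
      ext r c; simp [hCdef]
    rw [hBC, Matrix.submatrix_mul_equiv P₀ C τ σs.symm id, hP₀C]
    ext r c
    rcases Nat.lt_or_ge (r : ℕ) e with h | h
    · rw [Matrix.submatrix_apply, hτl r h]
      simp only [Matrix.fromRows_apply_inl, Matrix.of_apply, id_eq]
      rw [Matrix.one_apply]
      congr 1
      simp [Fin.ext_iff, eq_comm]
    · rw [Matrix.submatrix_apply, hτr r h]
      simp only [Matrix.fromRows_apply_inr, Matrix.of_apply, id_eq, Matrix.zero_apply]
      rw [if_neg (by have := c.isLt; omega)]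
lemma final_aux {R : Type*} [CommRing R] (m n : ℕ) (hm : 1 ≤ m) (hn : 1 ≤ n)
    (y : Fin n → R) (hy : ∃ i, IsUnit (y i)) :
    ∃ U V : Matrix (Fin (dN m n)) (Fin (dN m n)) R,
      IsUnit U.det ∧ IsUnit V.det ∧
      U * Mmat m n y * V = Matrix.of (fun i j : Fin (dN m n) =>
        if (i : ℕ) < eN m n ∧ (j : ℕ) = (i : ℕ) + eN m n then -1
        else if (j : ℕ) < eN m n ∧ (i : ℕ) = (j : ℕ) + eN m n then 1
        else 0) := by
  classical
  obtain ⟨n', rfl⟩ : ∃ n', n = n' + 1 := ⟨n - 1, by omega⟩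
  obtain ⟨i₀, hi₀⟩ := hy
  have hy' : ∃ i, i < n' + 1 ∧ IsUnit (pad y i) := by
    refine ⟨(i₀ : ℕ), i₀.isLt, ?_⟩
    have h1 : pad y (i₀ : ℕ) = y i₀ := by simp [pad, i₀.isLt]
    rwa [h1]
  obtain ⟨φ, hφinj, hφdet⟩ := claimD n' m hm (pad y) hy'
  have hdet : IsUnit (((Bmat m (n'+1) y).submatrix φ id).det) := hφdet
  obtain ⟨P, hPdet, hPB⟩ := exists_P (eN_le_fN m (n'+1)) (Bmat m (n'+1) y) φ hφinj hdet
  have hd : eN m (n'+1) + fN m (n'+1) = dN m (n'+1) := rfl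
  have hιs : ∀ ι : (Fin (eN m (n'+1)) ⊕ Fin (fN m (n'+1))) ≃ Fin (dN m (n'+1)),
      ι = finSumFinEquiv.trans (finCongr hd) →
      ι.symm = (finCongr hd.symm).trans finSumFinEquiv.symm := by
    intro ι hι; rw [hι]; rfl
  set ι : (Fin (eN m (n'+1)) ⊕ Fin (fN m (n'+1))) ≃ Fin (dN m (n'+1)) :=
    finSumFinEquiv.trans (finCongr hd) with hιdef
  have hιsymm := hιs ι hιdef
  have hι1 : ∀ (i : Fin (dN m (n'+1))) (h : (i:ℕ) < eN m (n'+1)),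
      ι.symm i = Sum.inl ⟨(i:ℕ), h⟩ := by
    intro i h
    have h1 : finCongr hd.symm i = Fin.castAdd (fN m (n'+1)) ⟨(i:ℕ), h⟩ := by
      apply Fin.ext; rfl
    rw [hιsymm, Equiv.trans_apply, h1, finSumFinEquiv_symm_apply_castAdd]
  have hι2 : ∀ (i : Fin (dN m (n'+1))) (h : eN m (n'+1) ≤ (i:ℕ)),
      ι.symm i = Sum.inr ⟨(i:ℕ) - eN m (n'+1),
        by have h2 := i.isLt; have h3 : dN m (n'+1) = eN m (n'+1) + fN m (n'+1) := rfl
           omega⟩ := by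
    intro i h
    have h1 : finCongr hd.symm i = Fin.natAdd (eN m (n'+1)) ⟨(i:ℕ) - eN m (n'+1),
        by have h2 := i.isLt; have h3 : dN m (n'+1) = eN m (n'+1) + fN m (n'+1) := rfl
           omega⟩ := by
      apply Fin.ext
      show (i:ℕ) = eN m (n'+1) + ((i:ℕ) - eN m (n'+1))
      omega
    rw [hιsymm, Equiv.trans_apply, h1, finSumFinEquiv_symm_apply_natAdd]
  set B := Bmat m (n'+1) y with hB
  have hM : Mmat m (n'+1) y =
      (Matrix.fromBlocks 0 (-(B.transpose)) B 0).submatrix ι.symm ι.symm := by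
    ext i j
    rw [Matrix.submatrix_apply]
    rcases Nat.lt_or_ge (i:ℕ) (eN m (n'+1)) with hi | hi <;>
      rcases Nat.lt_or_ge (j:ℕ) (eN m (n'+1)) with hj | hj
    · rw [hι1 i hi, hι1 j hj]
      simp only [Matrix.fromBlocks_apply₁₁, Matrix.zero_apply]
      show (if _ then _ else _) = _
      rw [if_neg (by omega), if_neg (by omega)]
    · rw [hι1 i hi, hι2 j hj]
      simp only [Matrix.fromBlocks_apply₁₂, Matrix.neg_apply, Matrix.transpose_apply]
      show (if _ then _ else _) = _
      rw [if_pos ⟨hi, hj⟩]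
      rfl
    · rw [hι2 i hi, hι1 j hj]
      simp only [Matrix.fromBlocks_apply₂₁]
      show (if _ then _ else _) = _
      rw [if_neg (by omega), if_pos ⟨hi, hj⟩]
      rfl
    · rw [hι2 i hi, hι2 j hj]
      simp only [Matrix.fromBlocks_apply₂₂, Matrix.zero_apply]
      show (if _ then _ else _) = _
      rw [if_neg (by omega), if_neg (by omega)]
  refine ⟨(Matrix.fromBlocks 1 0 0 P).submatrix ι.symm ι.symm,
    (Matrix.fromBlocks 1 0 0 P.transpose).submatrix ι.symm ι.symm, ?_, ?_, ?_⟩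
  · rw [Matrix.det_submatrix_equiv_self, Matrix.det_fromBlocks_zero₂₁,
      Matrix.det_one, one_mul]
    exact hPdet
  · rw [Matrix.det_submatrix_equiv_self, Matrix.det_fromBlocks_zero₂₁,
      Matrix.det_one, one_mul, Matrix.det_transpose]
    exact hPdet
  · rw [hM, Matrix.submatrix_mul_equiv _ _ _ ι.symm _,
      Matrix.submatrix_mul_equiv _ _ _ ι.symm _]
    have hmul : Matrix.fromBlocks 1 0 0 P * Matrix.fromBlocks 0 (-(B.transpose)) B 0 *
        Matrix.fromBlocks 1 0 0 P.transpose =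
        Matrix.fromBlocks 0
          (-((Matrix.of (fun (r : Fin (fN m (n'+1))) (c : Fin (eN m (n'+1))) =>
            if (r:ℕ) = (c:ℕ) then (1:R) else 0)).transpose))
          (Matrix.of (fun (r : Fin (fN m (n'+1))) (c : Fin (eN m (n'+1))) =>
            if (r:ℕ) = (c:ℕ) then (1:R) else 0)) 0 := by
      rw [Matrix.fromBlocks_multiply, Matrix.fromBlocks_multiply]
      simp only [Matrix.zero_mul, Matrix.mul_zero, Matrix.one_mul, Matrix.mul_one,
        add_zero, zero_add, Matrix.neg_mul, Matrix.mul_neg, neg_zero]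
      rw [← Matrix.transpose_mul, hPB]
    rw [hmul]
    ext i j
    rw [Matrix.submatrix_apply]
    rcases Nat.lt_or_ge (i:ℕ) (eN m (n'+1)) with hi | hi <;>
      rcases Nat.lt_or_ge (j:ℕ) (eN m (n'+1)) with hj | hj
    · rw [hι1 i hi, hι1 j hj]
      simp only [Matrix.fromBlocks_apply₁₁, Matrix.zero_apply, Matrix.of_apply]
      rw [if_neg (by omega), if_neg (by omega)]
    · rw [hι1 i hi, hι2 j hj]
      simp only [Matrix.fromBlocks_apply₁₂, Matrix.neg_apply, Matrix.transpose_apply,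
        Matrix.of_apply]
      by_cases hij : (j:ℕ) = (i:ℕ) + eN m (n'+1)
      · rw [if_pos (by omega : (j:ℕ) - eN m (n'+1) = (i:ℕ)), if_pos ⟨hi, hij⟩]
      · rw [if_neg (by omega : ¬ ((j:ℕ) - eN m (n'+1) = (i:ℕ))), if_neg (by omega),
          if_neg (by omega)]
        simp
    · rw [hι2 i hi, hι1 j hj]
      simp only [Matrix.fromBlocks_apply₂₁, Matrix.of_apply]
      by_cases hij : (i:ℕ) = (j:ℕ) + eN m (n'+1)
      · rw [if_pos (by omega : (i:ℕ) - eN m (n'+1) = (j:ℕ)), if_neg (by omega),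
          if_pos ⟨hj, hij⟩]
      · rw [if_neg (by omega : ¬ ((i:ℕ) - eN m (n'+1) = (j:ℕ))), if_neg (by omega),
          if_neg (by omega)]
    · rw [hι2 i hi, hι2 j hj]
      simp only [Matrix.fromBlocks_apply₂₂, Matrix.zero_apply, Matrix.of_apply]
      rw [if_neg (by omega), if_neg (by omega)]

theorem stmt5 (m n : ℕ) (hm : 1 ≤ m) (hn : 1 ≤ n)
    (𝔬 : Type*) [CommRing 𝔬] [IsDomain 𝔬] [IsDiscreteValuationRing 𝔬]
    (N : ℕ) (hN1 : 1 ≤ N)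
    (y : Fin n → 𝔬 ⧸ (IsLocalRing.maximalIdeal 𝔬 ^ N))
    (hy : ∃ i : Fin n, IsUnit (y i)) :
    ∃ U V : Matrix (Fin (dN m n)) (Fin (dN m n)) (𝔬 ⧸ (IsLocalRing.maximalIdeal 𝔬 ^ N)),
      IsUnit U.det ∧ IsUnit V.det ∧
      U * Mmat m n y * V =
        Matrix.of (fun (i j : Fin (dN m n)) =>
          if (i : ℕ) < eN m n ∧ (j : ℕ) = (i : ℕ) + eN m n then -1
          else if (j : ℕ) < eN m n ∧ (i : ℕ) = (j : ℕ) + eN m n then 1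
          else 0) := by
  exact final_aux m n hm hn y hy
end

section
/- Let 𝔬 be a discrete valuation ring and n ≥ 1. For every α ∈ GLₙ(𝔬) there exist a permutation matrix P ∈ GLₙ(𝔬) and a lower-triangular matrix b ∈ GLₙ(𝔬) such that the matrix α₀ := P·α·b satisfies: (α₀)_{j,k} = 0 whenever j + k ≤ n, and the antidiagonal entries (α₀)_{j,n+1−j} are units of 𝔬 for all j ∈ {1,…,n}. -/
open Matrix

lemma col_has_unit {R : Type*} [CommRing R] [IsLocalRing R] {n : Type*} [Fintype n]
    [DecidableEq n] (M : Matrix n n R) (h : IsUnit M.det) (c : n) :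
    ∃ i, IsUnit (M i c) := by
  by_contra hc
  push_neg at hc
  have hmem : M.det ∈ IsLocalRing.maximalIdeal R := by
    rw [Matrix.det_apply']
    apply Ideal.sum_mem
    intro σ _
    apply Ideal.mul_mem_left
    obtain ⟨z, hz⟩ : M (σ c) c ∣ ∏ i, M (σ i) i :=
      Finset.dvd_prod_of_mem _ (Finset.mem_univ c)
    rw [hz]
    exact Ideal.mul_mem_right _ _ ((IsLocalRing.mem_maximalIdeal _).2 (hc (σ c)))
  exact (IsLocalRing.mem_maximalIdeal _).1 hmem h

lemma aux_anti {R : Type*} [CommRing R] [IsLocalRing R] :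
    ∀ (n : ℕ) (α : Matrix (Fin n) (Fin n) R), IsUnit α.det →
    ∃ (σ : Equiv.Perm (Fin n)) (b : Matrix (Fin n) (Fin n) R),
      IsUnit b.det ∧ (∀ i j : Fin n, i < j → b i j = 0) ∧
      (∀ j k : Fin n, ((j : ℕ) + 1) + ((k : ℕ) + 1) ≤ n →
        (σ.permMatrix R * α * b) j k = 0) ∧
      (∀ j : Fin n, IsUnit ((σ.permMatrix R * α * b) j (Fin.rev j))) := by
  intro n
  induction n with
  | zero =>
    intro α _
    exact ⟨1, 1, by simp, fun i _ _ => i.elim0, fun j _ _ => j.elim0, fun j => j.elim0⟩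
  | succ n ih =>
    intro α hα
    have hperm : ∀ {m : ℕ} (τ : Equiv.Perm (Fin m)) (M : Matrix (Fin m) (Fin m) R),
        τ.permMatrix R * M = M.submatrix τ id := fun τ M =>
      PEquiv.toMatrix_toPEquiv_mul τ M
    obtain ⟨i, hu⟩ := col_has_unit α hα (Fin.last n)
    set u := α i (Fin.last n) with hu_def
    set w : R := ↑hu.unit⁻¹ with hw_def
    have hwu : u * w = 1 := by
      rw [hw_def]
      exact IsUnit.mul_val_inv hu
    set E : Matrix (Fin (n+1)) (Fin (n+1)) R :=
      Matrix.of fun r s => if r = Fin.last n ∧ s ≠ Fin.last n then -(w * α i s) else 0 with hE_def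
    set c : Matrix (Fin (n+1)) (Fin (n+1)) R := 1 + E with hc_def
    have hclow : ∀ r s : Fin (n+1), r < s → c r s = 0 := by
      intro r s hrs
      have h1 : r ≠ s := ne_of_lt hrs
      have h2 : r ≠ Fin.last n := by
        rintro rfl
        exact absurd hrs (not_lt.2 (Fin.le_last s))
      simp [hc_def, hE_def, Matrix.add_apply, Matrix.one_apply_ne h1, h2]
    have hcdiag : ∀ r, c r r = 1 := by
      intro r
      by_cases hr : r = Fin.last n <;>
        simp [hc_def, hE_def, Matrix.add_apply, Matrix.one_apply_eq, hr]
    have hcdet : c.det = 1 := by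
      rw [Matrix.det_of_lowerTriangular c (fun p q h => hclow p q h)]
      simp [hcdiag]
    set β : Matrix (Fin (n+1)) (Fin (n+1)) R := α * c with hβ_def
    have hβeq : ∀ j s, β j s = α j s + α j (Fin.last n) * E (Fin.last n) s := by
      intro j s
      have : β = α + α * E := by rw [hβ_def, hc_def, mul_add, mul_one]
      rw [this]
      rw [Matrix.add_apply, Matrix.mul_apply]
      congr 1
      apply Finset.sum_eq_single_of_mem (Fin.last n) (Finset.mem_univ _)
      intro m _ hm
      have hE0 : E m s = 0 := by simp [hE_def, hm]
      rw [hE0, mul_zero]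
    have hβlast : ∀ j, β j (Fin.last n) = α j (Fin.last n) := by
      intro j
      rw [hβeq]
      simp [hE_def]
    have hβi0 : ∀ m : Fin n, β i (Fin.castSucc m) = 0 := by
      intro m
      have hne : Fin.castSucc m ≠ Fin.last n := (Fin.castSucc_lt_last m).ne
      rw [hβeq]
      have hE1 : E (Fin.last n) (Fin.castSucc m) = -(w * α i (Fin.castSucc m)) := by
        simp [hE_def, hne]
      rw [hE1, ← hu_def]
      linear_combination (-(α i (Fin.castSucc m))) * hwu
    have hβdet : IsUnit β.det := by
      rw [hβ_def, Matrix.det_mul, hcdet, mul_one]; exact hα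
    set β' : Matrix (Fin n) (Fin n) R := β.submatrix i.succAbove Fin.castSucc with hβ'_def
    have hβ'det : IsUnit β'.det := by
      have hexp : β.det = (-1) ^ ((i : ℕ) + (Fin.last n : ℕ)) * u * β'.det := by
        rw [Matrix.det_succ_row β i]
        rw [Finset.sum_eq_single_of_mem (Fin.last n) (Finset.mem_univ _)]
        · rw [hβlast i, Fin.succAbove_last, ← hu_def, ← hβ'_def]
        · intro m _ hm
          obtain ⟨m', rfl⟩ : ∃ m', m = Fin.castSucc m' :=
            ⟨m.castPred hm, (Fin.castSucc_castPred m hm).symm⟩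
          rw [hβi0 m', mul_zero, zero_mul]
      rw [hexp] at hβdet
      exact isUnit_of_mul_isUnit_right hβdet
    obtain ⟨σ', b', hb'det, hb'low, hz, hd⟩ := ih β' hβ'det
    set b₂ : Matrix (Fin (n+1)) (Fin (n+1)) R :=
      Matrix.of fun r s =>
        if hr : r = Fin.last n then (if s = Fin.last n then 1 else 0)
        else if hs : s = Fin.last n then 0 else b' (r.castPred hr) (s.castPred hs) with hb₂_def
    have hb2cc : ∀ m k : Fin n, b₂ m.castSucc k.castSucc = b' m k := by
      intro m k
      simp only [hb₂_def, Matrix.of_apply, dif_neg (Fin.castSucc_lt_last m).ne,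
        dif_neg (Fin.castSucc_lt_last k).ne, Fin.castPred_castSucc]
    have hb2cl : ∀ m : Fin n, b₂ m.castSucc (Fin.last n) = 0 := by
      intro m
      simp [hb₂_def, dif_neg (Fin.castSucc_lt_last m).ne]
    have hb2ll : b₂ (Fin.last n) (Fin.last n) = 1 := by simp [hb₂_def]
    have hb2lc : ∀ k : Fin n, b₂ (Fin.last n) k.castSucc = 0 := by
      intro k
      simp [hb₂_def, (Fin.castSucc_lt_last k).ne]
    have hb2low : ∀ r s : Fin (n+1), r < s → b₂ r s = 0 := by
      intro r s hrs
      have hr : r ≠ Fin.last n := by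
        rintro rfl
        exact absurd hrs (not_lt.2 (Fin.le_last s))
      simp only [hb₂_def, Matrix.of_apply, dif_neg hr]
      by_cases hs : s = Fin.last n
      · rw [dif_pos hs]
      · rw [dif_neg hs]
        apply hb'low
        rw [Fin.lt_def]
        simpa [Fin.coe_castPred] using hrs
    have hb2det : b₂.det = b'.det := by
      rw [Matrix.det_succ_row b₂ (Fin.last n)]
      rw [Finset.sum_eq_single_of_mem (Fin.last n) (Finset.mem_univ _)]
      · rw [hb2ll, Fin.succAbove_last]
        have hsub : b₂.submatrix Fin.castSucc Fin.castSucc = b' := by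
          ext m k
          exact hb2cc m k
        rw [hsub]
        have hsign : (-1 : R) ^ ((Fin.last n : ℕ) + (Fin.last n : ℕ)) = 1 := by
          rw [Fin.val_last]
          exact Even.neg_one_pow ⟨n, by ring⟩
        rw [hsign]
        ring
      · intro m _ hm
        obtain ⟨m', rfl⟩ : ∃ m', m = Fin.castSucc m' :=
          ⟨m.castPred hm, (Fin.castSucc_castPred m hm).symm⟩
        rw [hb2lc m', mul_zero, zero_mul]
    set b : Matrix (Fin (n+1)) (Fin (n+1)) R := c * b₂ with hb_def
    have hblow : ∀ r s : Fin (n+1), r < s → b r s = 0 := by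
      intro r s hrs
      rw [hb_def, Matrix.mul_apply]
      apply Finset.sum_eq_zero
      intro m _
      by_cases hm : r < m
      · rw [hclow r m hm, zero_mul]
      · rw [hb2low m s (lt_of_le_of_lt (not_lt.1 hm) hrs), mul_zero]
    have hbdet : IsUnit b.det := by
      rw [hb_def, Matrix.det_mul, hcdet, one_mul, hb2det]; exact hb'det
    set σ : Equiv.Perm (Fin (n+1)) :=
      ((finSuccEquiv n).trans (Equiv.optionCongr σ')).trans (finSuccEquiv' i).symm with hσ_def
    have hσ0 : σ 0 = i := by simp [hσ_def]
    have hσs : ∀ j' : Fin n, σ j'.succ = i.succAbove (σ' j') := by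
      intro j'
      simp [hσ_def]
    have hmulcc : ∀ (r : Fin (n+1)) (k : Fin n),
        (β * b₂) r k.castSucc = ∑ m, β r m.castSucc * b' m k := by
      intro r k
      rw [Matrix.mul_apply, Fin.sum_univ_castSucc, hb2lc k, mul_zero, add_zero]
      exact Finset.sum_congr rfl fun m _ => by rw [hb2cc]
    have hmullast : ∀ r : Fin (n+1), (β * b₂) r (Fin.last n) = β r (Fin.last n) := by
      intro r
      rw [Matrix.mul_apply, Fin.sum_univ_castSucc, hb2ll, mul_one]
      rw [Finset.sum_eq_zero fun m _ => by rw [hb2cl m, mul_zero], zero_add]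
    have hPmain : ∀ j k : Fin (n+1), (σ.permMatrix R * α * b) j k = (β * b₂) (σ j) k := by
      intro j k
      have h1 : σ.permMatrix R * α * b = σ.permMatrix R * (β * b₂) := by
        rw [hb_def, hβ_def]
        simp only [Matrix.mul_assoc]
      rw [h1, hperm]
      rfl
    have hP' : ∀ j' k : Fin n,
        (σ'.permMatrix R * β' * b') j' k = ∑ m, β (i.succAbove (σ' j')) m.castSucc * b' m k := by
      intro j' k
      rw [Matrix.mul_assoc, hperm]
      simp [Matrix.mul_apply, hβ'_def]
    refine ⟨σ, b, hbdet, hblow, ?_, ?_⟩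
    · intro j k hjk
      have hk : (k : ℕ) < n := by omega
      have hkl : k ≠ Fin.last n := by
        intro h
        rw [h, Fin.val_last] at hk
        omega
      obtain ⟨k₀, rfl⟩ : ∃ k₀ : Fin n, k = k₀.castSucc :=
        ⟨k.castPred hkl, (Fin.castSucc_castPred k hkl).symm⟩
      rw [hPmain]
      rcases Fin.eq_zero_or_eq_succ j with rfl | ⟨j', rfl⟩
      · rw [hσ0, hmulcc]
        exact Finset.sum_eq_zero fun m _ => by rw [hβi0 m, zero_mul]
      · rw [hσs, hmulcc]
        have harith : ((j' : ℕ) + 1) + ((k₀ : ℕ) + 1) ≤ n := by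
          simp only [Fin.val_succ, Fin.coe_castSucc] at hjk
          omega
        have := hz j' k₀ harith
        rw [hP'] at this
        exact this
    · intro j
      rcases Fin.eq_zero_or_eq_succ j with rfl | ⟨j', rfl⟩
      · rw [Fin.rev_zero, hPmain, hσ0, hmullast, hβlast]
        exact hu
      · rw [Fin.rev_succ, hPmain, hσs, hmulcc]
        have := hd j'
        rw [hP'] at this
        exact this

theorem stmt6 (𝔬 : Type*) [CommRing 𝔬] [IsDomain 𝔬] [IsDiscreteValuationRing 𝔬]
    (n : ℕ) (hn : 1 ≤ n)
    (α : Matrix (Fin n) (Fin n) 𝔬) (hα : IsUnit α.det) :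
    ∃ (P b : Matrix (Fin n) (Fin n) 𝔬),
      (∃ σ : Equiv.Perm (Fin n), P = σ.permMatrix 𝔬) ∧
      IsUnit b.det ∧
      (∀ i j : Fin n, i < j → b i j = 0) ∧
      (∀ j k : Fin n, ((j : ℕ) + 1) + ((k : ℕ) + 1) ≤ n → (P * α * b) j k = 0) ∧
      (∀ j : Fin n, IsUnit ((P * α * b) j (Fin.rev j))) := by
  obtain ⟨σ, b, h1, h2, h3, h4⟩ := aux_anti n α hα
  exact ⟨σ.permMatrix 𝔬, b, ⟨σ, rfl⟩, h1, h2, h3, h4⟩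
end

section
/- Let m, n ≥ 1 be integers, let 𝔬, π, I, (r_ι), r, (ν_k) be as in the type data, and let α ∈ GLₙ(𝔬) with columns α^{(1)},…,α^{(n)} ∈ 𝔬ⁿ. Write a row vector g ∈ 𝔬^{d(m,n)} as g = (g⁽¹⁾, g⁽²⁾) with g⁽¹⁾ ∈ 𝔬^{e(m,n)} and g⁽²⁾ ∈ 𝔬^{f(m,n)}. Then g·M_{m,n}(α^{(j)}) ≡ 0 mod π^{ν_j} holds for all j ∈ {1,…,n} if and only if g⁽¹⁾ ≡ 0 mod π^r and g⁽²⁾·(π^{r−ν_1}·B_{m,n}(α^{(1)}) | ⋯ | π^{r−ν_n}·B_{m,n}(α^{(n)})) ≡ 0 mod π^r, where ( · | · ) denotes horizontal juxtaposition of matrices. -/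
open scoped BigOperators

lemma eN_mono {k k' : ℕ} (nn : ℕ) (h : k ≤ k') : eN k nn ≤ eN k' nn := by
  unfold eN
  exact Nat.choose_le_choose _ (by omega)

lemma fN_eq (m nn : ℕ) : fN m nn = eN (m+1) nn := by
  unfold eN fN; congr 1

lemma eN_pascal (k n : ℕ) : eN (k+1) (n+2) = eN k (n+2) + eN (k+1) (n+1) := by
  unfold eN
  rw [show n + 2 + (k+1) - 2 = (n + k) + 1 by omega, show n + 2 - 1 = n + 1 by omega,
    show n + 2 + k - 2 = n + k by omega, show n + 1 + (k+1) - 2 = n + k by omega,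
    show n + 1 - 1 = n by omega, Nat.choose_succ_succ]
  simp [Nat.succ_eq_add_one]
  omega

lemma card_filter_eN (N nn r i : ℕ) (hiN : i ≤ N) (h1 : 1 ≤ i)
    (hlo : eN (i-1) nn ≤ r) (hhi : r < eN i nn) :
    ((Finset.range N).filter fun k => eN k nn ≤ r).card = i := by
  have hset : ((Finset.range N).filter fun k => eN k nn ≤ r) = Finset.range i := by
    ext k
    simp only [Finset.mem_filter, Finset.mem_range]
    constructor
    · rintro ⟨hkN, hk⟩
      by_contra hk'
      exact absurd (le_trans (eN_mono nn (by omega : i ≤ k)) hk) (by omega)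
    · intro hk
      exact ⟨by omega, le_trans (eN_mono nn (by omega : k ≤ i - 1)) hlo⟩
  rw [hset, Finset.card_range]

lemma blockIdx (n : ℕ) : ∀ (m r : ℕ), r < eN (m+1) (n+2) →
    ∃ i, 1 ≤ i ∧ i ≤ m+1 ∧ eN (i-1) (n+2) ≤ r ∧ r < eN i (n+2) := by
  intro m
  induction m with
  | zero => intro r hr; exact ⟨1, le_refl _, le_refl _, by rw [eN_zero]; omega, hr⟩
  | succ m IH =>
    intro r hr
    by_cases h : r < eN (m+1) (n+2)
    · obtain ⟨i, h1, h2, h3, h4⟩ := IH r h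
      exact ⟨i, h1, by omega, h3, h4⟩
    · exact ⟨m+2, by omega, by omega, by simpa using not_lt.mp h, hr⟩

lemma block_uniq {n r i j : ℕ} (hi1 : 1 ≤ i) (hj1 : 1 ≤ j)
    (hilo : eN (i-1) (n+2) ≤ r) (hihi : r < eN i (n+2))
    (hjlo : eN (j-1) (n+2) ≤ r) (hjhi : r < eN j (n+2)) : i = j := by
  by_contra h
  rcases Nat.lt_or_ge i j with hij | hij
  · exact absurd (le_trans (eN_mono (n+2) (by omega : i ≤ j - 1)) hjlo) (by omega)
  · have : i ≠ j := h
    exact absurd (le_trans (eN_mono (n+2) (by omega : j ≤ i - 1)) hilo) (by omega)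

lemma entry_eq {R : Type*} [CommRing R] (n m : ℕ) (y : ℕ → R) (r c i j : ℕ)
    (hi1 : 1 ≤ i) (him : i ≤ m+1) (hilo : eN (i-1) (n+2) ≤ r) (hihi : r < eN i (n+2))
    (hj1 : 1 ≤ j) (hjm : j ≤ m) (hjlo : eN (j-1) (n+2) ≤ c) (hjhi : c < eN j (n+2)) :
    Bent (n+2) m y r c =
      if i = j then
        (if r - eN (i - 1) (n + 2) = c - eN (j - 1) (n + 2) then y 0 else 0)
      else if i = j + 1 then
        Bent (n + 1) j (fun k => y (k + 1)) (r - eN j (n + 2)) (c - eN (j - 1) (n + 2))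
      else 0 := by
  show (let i' := ((Finset.range (m + 2)).filter fun k => eN k (n + 2) ≤ r).card
        let j' := ((Finset.range (m + 1)).filter fun k => eN k (n + 2) ≤ c).card
        if i' = j' then
          (if r - eN (i' - 1) (n + 2) = c - eN (j' - 1) (n + 2) then y 0 else 0)
        else if i' = j' + 1 then
          Bent (n + 1) j' (fun k => y (k + 1)) (r - eN j' (n + 2)) (c - eN (j' - 1) (n + 2))
        else 0) = _
  rw [card_filter_eN (m+2) (n+2) r i (by omega) hi1 hilo hihi,
      card_filter_eN (m+1) (n+2) c j (by omega) hj1 hjlo hjhi]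


lemma struct {R : Type*} [CommRing R] (n m : ℕ) (y v : ℕ → R) (r i : ℕ)
    (hi1 : 1 ≤ i) (him : i ≤ m+1)
    (hilo : eN (i-1) (n+2) ≤ r) (hihi : r < eN i (n+2)) :
    ∑ c ∈ Finset.range (eN m (n+2)), Bent (n+2) m y r c * v c
    = (if i ≤ m then y 0 * v r else 0)
      + (if 2 ≤ i then
          ∑ c' ∈ Finset.range (eN (i-1) (n+1)),
            Bent (n+1) (i-1) (fun k => y (k+1)) (r - eN (i-1) (n+2)) c'
              * v (eN (i-2) (n+2) + c')
        else 0) := by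
  have key : ∀ c ∈ Finset.range (eN m (n+2)),
      Bent (n+2) m y r c * v c
      = (if c = r ∧ i ≤ m then y 0 * v c else 0)
        + (if 2 ≤ i ∧ eN (i-2) (n+2) ≤ c ∧ c < eN (i-1) (n+2) then
            Bent (n+1) (i-1) (fun k => y (k+1)) (r - eN (i-1) (n+2)) (c - eN (i-2) (n+2)) * v c
          else 0) := by
    intro c hc
    rw [Finset.mem_range] at hc
    obtain ⟨j, hj1, hjm1, hjlo, hjhi⟩ := blockIdx n m c (lt_of_lt_of_le hc (eN_mono _ (by omega)))
    have hjm : j ≤ m := by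
      by_contra h
      have : eN m (n+2) ≤ c := le_trans (eN_mono _ (by omega : m ≤ j - 1)) hjlo
      omega
    rw [entry_eq n m y r c i j hi1 him hilo hihi hj1 hjm hjlo hjhi]
    by_cases hij : i = j
    · subst hij
      have hH : ¬ (2 ≤ i ∧ eN (i-2) (n+2) ≤ c ∧ c < eN (i-1) (n+2)) := by
        rintro ⟨_, _, h⟩; omega
      rw [if_pos rfl, if_neg hH, add_zero]
      have hoff : (r - eN (i-1) (n+2) = c - eN (i-1) (n+2)) ↔ c = r := by omega
      by_cases hcr : c = r
      · rw [if_pos (hoff.mpr hcr), if_pos ⟨hcr, hjm⟩, hcr]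
      · rw [if_neg (fun h => hcr (hoff.mp h)), if_neg (fun h => hcr h.1), zero_mul]
    · have hcr : c ≠ r := by
        intro h; subst h
        exact hij (block_uniq hi1 hj1 hilo hihi hjlo hjhi)
      have hG : (if c = r ∧ i ≤ m then y 0 * v c else 0) = 0 := if_neg (fun h => hcr h.1)
      rw [if_neg hij, hG, zero_add]
      by_cases hij1 : i = j + 1
      · have e1 : i - 1 = j := by omega
        have e2 : i - 2 = j - 1 := by omega
        rw [if_pos hij1, if_pos ⟨by omega, by rw [e2]; exact hjlo, by rw [e1]; exact hjhi⟩,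
          e1, e2]
      · have hne : ¬ (2 ≤ i ∧ eN (i-2) (n+2) ≤ c ∧ c < eN (i-1) (n+2)) := by
          rintro ⟨h2, hlo', hhi'⟩
          have h1i : 1 ≤ i - 1 := by omega
          have hlo'' : eN (i-1-1) (n+2) ≤ c := by
            rw [show i-1-1 = i-2 by omega]; exact hlo'
          have := block_uniq hj1 h1i hjlo hjhi hlo'' hhi'
          omega
        rw [if_neg hij1, if_neg hne, zero_mul]
  rw [Finset.sum_congr rfl key, Finset.sum_add_distrib]
  congr 1
  · by_cases him' : i ≤ m
    · have hrE : r < eN m (n+2) := lt_of_lt_of_le hihi (eN_mono _ him')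
      rw [if_pos him', Finset.sum_eq_single r]
      · rw [if_pos ⟨rfl, him'⟩]
      · intro c _ hcr; rw [if_neg (by tauto)]
      · intro h; exact absurd (Finset.mem_range.mpr hrE) h
    · rw [if_neg him']
      exact Finset.sum_eq_zero fun c _ => by rw [if_neg (by tauto)]
  · by_cases h2 : 2 ≤ i
    · simp only [h2, true_and, if_true]
      have hsub : eN (i-1) (n+2) = eN (i-2) (n+2) + eN (i-1) (n+1) := by
        have := eN_pascal (i-2) n
        rw [show i - 2 + 1 = i - 1 by omega] at this
        exact this
      rw [← Finset.sum_filter]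
      have hflt : (Finset.range (eN m (n+2))).filter
            (fun c => eN (i-2) (n+2) ≤ c ∧ c < eN (i-1) (n+2))
          = Finset.Ico (eN (i-2) (n+2)) (eN (i-1) (n+2)) := by
        have hle : eN (i-1) (n+2) ≤ eN m (n+2) := eN_mono _ (by omega)
        ext c
        simp only [Finset.mem_filter, Finset.mem_range, Finset.mem_Ico]
        omega
      rw [hflt, Finset.sum_Ico_eq_sum_range,
        show eN (i-1) (n+2) - eN (i-2) (n+2) = eN (i-1) (n+1) by omega]
      apply Finset.sum_congr rfl
      intro c' _
      rw [Nat.add_sub_cancel_left]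
    · simp only [h2, false_and, if_false]
      exact Finset.sum_const_zero

lemma modp {R : Type*} [CommRing R] {π : R} (hπ : Prime π) :
    ∀ n m (y v : ℕ → R), (∃ i, i < n ∧ ¬ π ∣ y i) →
    (∀ rr, rr < fN m n → π ∣ ∑ c ∈ Finset.range (eN m n), Bent n m y rr c * v c) →
    ∀ c, c < eN m n → π ∣ v c := by
  intro n
  induction n using Nat.strong_induction_on with
  | _ n IH =>
    match n with
    | 0 => rintro m y v ⟨i, hi, -⟩; omega
    | 1 =>
      rintro m y v ⟨i, hi, hyi⟩ hrow c hc
      interval_cases i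
      rw [eN_one] at hc
      interval_cases c
      have h0 := hrow 0 (by rw [fN_one]; omega)
      rw [eN_one] at h0
      simp only [Finset.sum_range_one] at h0
      have : Bent 1 m y 0 0 = y 0 := by simp [Bent]
      rw [this] at h0
      rcases hπ.2.2 _ _ h0 with h | h
      · exact absurd h hyi
      · exact h
    | (n+2) =>
      rintro m y v hy hrow
      by_cases hy0 : π ∣ y 0
      · -- case B
        obtain ⟨i0, hi0n, hi0⟩ := hy
        have hi0' : 1 ≤ i0 := by
          rcases Nat.eq_zero_or_pos i0 with h | h
          · rw [h] at hi0; exact absurd hy0 hi0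
          · exact h
        intro c hc
        obtain ⟨j, hj1, hjm1, hjlo, hjhi⟩ := blockIdx n m c (lt_of_lt_of_le hc (eN_mono _ (by omega)))
        have hjm : j ≤ m := by
          by_contra h
          have : eN m (n+2) ≤ c := le_trans (eN_mono _ (by omega : m ≤ j - 1)) hjlo
          omega
        have hpas : eN j (n+2) = eN (j-1) (n+2) + eN j (n+1) := by
          have := eN_pascal (j-1) n
          rw [show j - 1 + 1 = j by omega] at this
          exact this
        have hsub : ∀ rr', rr' < fN j (n+1) →
            π ∣ ∑ c' ∈ Finset.range (eN j (n+1)),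
              Bent (n+1) j (fun k => y (k+1)) rr' c' * v (eN (j-1) (n+2) + c') := by
          intro rr' hrr'
          rw [fN_eq] at hrr'
          set r : ℕ := eN j (n+2) + rr' with hrdef
          have hrlo : eN (j+1-1) (n+2) ≤ r := by simp [hrdef]
          have hrhi : r < eN (j+1) (n+2) := by
            rw [eN_pascal j n]; omega
          have hrf : r < fN m (n+2) := by
            rw [fN_eq]
            exact lt_of_lt_of_le hrhi (eN_mono _ (by omega))
          have hS := hrow r hrf
          rw [struct n m y v r (j+1) (by omega) (by omega) hrlo hrhi] at hS
          rw [if_pos (by omega : 2 ≤ j + 1)] at hS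
          have hdiag : π ∣ (if j + 1 ≤ m then y 0 * v r else 0) := by
            split
            · exact hy0.mul_right _
            · exact dvd_zero _
          have := (dvd_sub hS hdiag)
          rw [add_comm, add_sub_cancel_right] at this
          rw [show j + 1 - 1 = j by omega, show j + 1 - 2 = j - 1 by omega,
            show r - eN j (n+2) = rr' by omega] at this
          exact this
        have hsh : ¬ π ∣ y (i0 - 1 + 1) := by
          rwa [show i0 - 1 + 1 = i0 by omega]
        have hconc := IH (n+1) (by omega) j (fun k => y (k+1))
          (fun c' => v (eN (j-1) (n+2) + c'))
          ⟨i0 - 1, by omega, hsh⟩ hsub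
        simpa only [Nat.add_sub_cancel' hjlo] using hconc (c - eN (j-1) (n+2)) (by omega)
      · -- case A
        intro c
        induction c using Nat.strong_induction_on with
        | _ c IHc =>
          intro hc
          obtain ⟨j, hj1, hjm1, hjlo, hjhi⟩ := blockIdx n m c (lt_of_lt_of_le hc (eN_mono _ (by omega)))
          have hjm : j ≤ m := by
            by_contra h
            have : eN m (n+2) ≤ c := le_trans (eN_mono _ (by omega : m ≤ j - 1)) hjlo
            omega
          have hcf : c < fN m (n+2) := by
            rw [fN_eq]; exact lt_of_lt_of_le hc (eN_mono _ (by omega))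
          have hS := hrow c hcf
          rw [struct n m y v c j hj1 (by omega) hjlo hjhi, if_pos hjm] at hS
          have hsubdvd : π ∣ (if 2 ≤ j then
              ∑ c' ∈ Finset.range (eN (j-1) (n+1)),
                Bent (n+1) (j-1) (fun k => y (k+1)) (c - eN (j-1) (n+2)) c'
                  * v (eN (j-2) (n+2) + c') else 0) := by
            split
            · rename_i h2
              apply Finset.dvd_sum
              intro c' hc'
              rw [Finset.mem_range] at hc'
              have hpas : eN (j-1) (n+2) = eN (j-2) (n+2) + eN (j-1) (n+1) := by
                have := eN_pascal (j-2) n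
                rw [show j - 2 + 1 = j - 1 by omega] at this
                exact this
              have hlt : eN (j-2) (n+2) + c' < c := by
                have : eN (j-2) (n+2) + c' < eN (j-1) (n+2) := by omega
                omega
              exact (IHc _ hlt (by omega)).mul_left _
            · exact dvd_zero _
          have hyvc : π ∣ y 0 * v c := by
            have := dvd_sub hS hsubdvd
            rwa [add_sub_cancel_right] at this
          rcases hπ.2.2 _ _ hyvc with h | h
          · exact absurd h hy0
          · exact h

lemma modpt {R : Type*} [CommRing R] [IsDomain R] {π : R} (hπ : Prime π)
    (n m : ℕ) (y v : ℕ → R) (hy : ∃ i, i < n ∧ ¬ π ∣ y i) :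
    ∀ t : ℕ, (∀ rr, rr < fN m n → π^t ∣ ∑ c ∈ Finset.range (eN m n), Bent n m y rr c * v c) →
    ∀ c, c < eN m n → π^t ∣ v c := by
  intro t
  induction t generalizing v with
  | zero => intro _ c _; simp
  | succ t IHt =>
    intro hd c hc
    have h1 : ∀ c, c < eN m n → π^t ∣ v c :=
      fun c hc => IHt v (fun rr hrr => dvd_trans (pow_dvd_pow π (by omega : t ≤ t+1)) (hd rr hrr)) c hc
    set w : ℕ → R := fun c => if h : c < eN m n then (h1 c h).choose else 0 with hwdef
    have hvw : ∀ c, c < eN m n → v c = π^t * w c := by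
      intro c hc
      rw [hwdef]
      simp only [dif_pos hc]
      exact (h1 c hc).choose_spec
    have hdw : ∀ rr, rr < fN m n → π ∣ ∑ c ∈ Finset.range (eN m n), Bent n m y rr c * w c := by
      intro rr hrr
      have : ∑ c ∈ Finset.range (eN m n), Bent n m y rr c * v c
          = π^t * ∑ c ∈ Finset.range (eN m n), Bent n m y rr c * w c := by
        rw [Finset.mul_sum]
        apply Finset.sum_congr rfl
        intro c hcm
        rw [Finset.mem_range] at hcm
        rw [hvw c hcm]; ring
      have hdd := hd rr hrr
      rw [this, pow_succ] at hdd
      exact (mul_dvd_mul_iff_left (pow_ne_zero t hπ.ne_zero)).mp hdd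
    have hwc := modp hπ n m y w hy hdw c hc
    rw [hvw c hc, pow_succ]
    exact mul_dvd_mul_left _ hwc

lemma pad_coe {R : Type*} [Zero R] {n : ℕ} (y : Fin n → R) (i : Fin n) : pad y (i : ℕ) = y i := by
  simp [pad]

lemma sum_range_split {R : Type*} [CommRing R] (a b : ℕ) (F : ℕ → R) :
    ∑ k ∈ Finset.range (a+b), F k = ∑ k ∈ Finset.range a, F k + ∑ k ∈ Finset.range b, F (a+k) := by
  have h1 : ∑ k ∈ Finset.Ico a (a+b), F k = ∑ k ∈ Finset.range b, F (a+k) := by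
    rw [Finset.sum_Ico_eq_sum_range, Nat.add_sub_cancel_left]
  rw [Finset.range_eq_Ico, ← Finset.sum_Ico_consecutive _ (Nat.zero_le a) (Nat.le_add_right a b),
    h1, ← Finset.range_eq_Ico]

lemma vecMul_Mmat {R : Type*} [CommRing R] (m n : ℕ) (y : Fin n → R) (g : Fin (dN m n) → R)
    (c : Fin (dN m n)) :
    Matrix.vecMul g (Mmat m n y) c =
      if (c : ℕ) < eN m n then
        ∑ k ∈ Finset.range (fN m n), pad g (eN m n + k) * Bent n m (pad y) k (c : ℕ)
      else
        - ∑ k ∈ Finset.range (eN m n), pad g k * Bent n m (pad y) ((c : ℕ) - eN m n) k := by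
  have h0 : Matrix.vecMul g (Mmat m n y) c = ∑ i : Fin (dN m n), g i * Mmat m n y i c := by
    simp [Matrix.vecMul, dotProduct]
  set F : ℕ → R := fun k =>
    pad g k * (if k < eN m n ∧ eN m n ≤ (c:ℕ) then -(Bent n m (pad y) ((c:ℕ) - eN m n) k)
      else if eN m n ≤ k ∧ (c:ℕ) < eN m n then Bent n m (pad y) (k - eN m n) (c:ℕ) else 0)
    with hF
  have h1 : ∀ i : Fin (dN m n), g i * Mmat m n y i c = F (i : ℕ) := by
    intro i
    rw [hF]
    simp only [Mmat, Matrix.of_apply, pad, dif_pos i.isLt]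
  have hs : ∑ i ∈ Finset.range (dN m n), F i
      = ∑ k ∈ Finset.range (eN m n), F k + ∑ k ∈ Finset.range (fN m n), F (eN m n + k) :=
    sum_range_split (eN m n) (fN m n) F
  rw [h0, Finset.sum_congr rfl (fun i _ => h1 i), Fin.sum_univ_eq_sum_range F (dN m n), hs]
  by_cases h : (c : ℕ) < eN m n
  · rw [if_pos h]
    have hz : ∀ k ∈ Finset.range (eN m n), F k = 0 := by
      intro k hk
      rw [Finset.mem_range] at hk
      rw [hF]
      simp only
      rw [if_neg (by omega), if_neg (by omega), mul_zero]
    rw [Finset.sum_eq_zero hz, zero_add]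
    apply Finset.sum_congr rfl
    intro k hk
    rw [hF]
    simp only
    rw [if_neg (by omega), if_pos ⟨by omega, h⟩, Nat.add_sub_cancel_left]
  · rw [if_neg h]
    have hz : ∀ k ∈ Finset.range (fN m n), F (eN m n + k) = 0 := by
      intro k hk
      rw [hF]
      simp only
      rw [if_neg (by omega), if_neg (by omega), mul_zero]
    rw [Finset.sum_eq_zero hz, add_zero, ← Finset.sum_neg_distrib]
    apply Finset.sum_congr rfl
    intro k hk
    rw [Finset.mem_range] at hk
    rw [hF]
    simp only
    rw [if_pos ⟨hk, by omega⟩, mul_neg]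

theorem stmt7 (m n : ℕ) (hm : 1 ≤ m) (hn : 1 ≤ n)
    (𝔬 : Type*) [CommRing 𝔬] [IsDomain 𝔬] [IsDiscreteValuationRing 𝔬]
    (π : 𝔬) (hπ : Irreducible π)
    (I : Finset ℕ) (hI : I ⊆ Finset.Icc 1 (n - 1))
    (rι : ℕ → ℕ) (hrι : ∀ ι ∈ I, 1 ≤ rι ι)
    (r : ℕ) (hr : r = ∑ ι ∈ I, rι ι)
    (ν : ℕ → ℕ) (hν : ∀ k, ν k = ∑ ι ∈ I.filter (fun ι => ι ≤ k - 1), rι ι)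
    (α : Matrix (Fin n) (Fin n) 𝔬) (hα : IsUnit α.det)
    (g : Fin (dN m n) → 𝔬) :
    (∀ j : Fin n, ∀ c : Fin (dN m n),
        π ^ ν ((j : ℕ) + 1) ∣ Matrix.vecMul g (Mmat m n fun i => α i j) c) ↔
      ((∀ c : Fin (dN m n), (c : ℕ) < eN m n → π ^ r ∣ g c) ∧
       (∀ c : Fin n × Fin (eN m n),
          π ^ r ∣ Matrix.vecMul
            (fun i : Fin (fN m n) => g ⟨eN m n + (i : ℕ), by have := i.isLt; simp only [dN]; omega⟩)
            (Matrix.of fun (rr : Fin (fN m n)) (jc : Fin n × Fin (eN m n)) =>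
              π ^ (r - ν ((jc.1 : ℕ) + 1)) * Bmat m n (fun i => α i jc.1) rr jc.2) c)) := by
  have hprime : Prime π := hπ.prime
  have hπ0 : π ≠ 0 := hπ.ne_zero
  have hdeq : dN m n = eN m n + fN m n := rfl
  have hνle : ∀ k, ν k ≤ r := by
    intro k
    rw [hν k, hr]
    exact Finset.sum_le_sum_of_subset (Finset.filter_subset _ _)
  have hνn : ν n = r := by
    rw [hν n, hr]
    congr 1
    apply Finset.filter_true_of_mem
    intro ι hι
    have := hI hι
    rw [Finset.mem_Icc] at this
    omega
  have hcol : ∀ j : Fin n, ∃ i, i < n ∧ ¬ π ∣ pad (fun i => α i j) i := by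
    intro j
    by_contra hcon
    push_neg at hcon
    have hdvd : ∀ i : Fin n, π ∣ α i j := by
      intro i
      have := hcon (i : ℕ) i.isLt
      rwa [pad_coe (fun i => α i j) i] at this
    have h1 : α⁻¹ * α = 1 := Matrix.nonsing_inv_mul α hα
    have h2 : (1 : Matrix (Fin n) (Fin n) 𝔬) j j = ∑ k, α⁻¹ j k * α k j := by
      rw [← h1, Matrix.mul_apply]
    rw [Matrix.one_apply_eq] at h2
    have hd1 : π ∣ (1 : 𝔬) := by
      rw [h2]
      exact Finset.dvd_sum fun k _ => (hdvd k).mul_left _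
    exact hπ.not_isUnit (isUnit_of_dvd_one hd1)
  have hpoweq : ∀ (k : ℕ) (x : 𝔬), (π ^ r ∣ π ^ (r - ν k) * x) ↔ π ^ ν k ∣ x := by
    intro k x
    have hsp : π ^ r = π ^ (r - ν k) * π ^ ν k := by
      rw [← pow_add, Nat.sub_add_cancel (hνle k)]
    rw [hsp, mul_dvd_mul_iff_left (pow_ne_zero _ hπ0)]
  -- reformulate LHS
  have hLHS : (∀ j : Fin n, ∀ c : Fin (dN m n),
        π ^ ν ((j : ℕ) + 1) ∣ Matrix.vecMul g (Mmat m n fun i => α i j) c) ↔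
      ((∀ j : Fin n, ∀ cc, cc < eN m n → π ^ ν ((j:ℕ)+1) ∣
          ∑ k ∈ Finset.range (fN m n), pad g (eN m n + k) * Bent n m (pad fun i => α i j) k cc)
       ∧ (∀ j : Fin n, ∀ rr, rr < fN m n → π ^ ν ((j:ℕ)+1) ∣
          ∑ k ∈ Finset.range (eN m n), pad g k * Bent n m (pad fun i => α i j) rr k)) := by
    constructor
    · intro h
      constructor
      · intro j cc hcc
        have hcd : cc < dN m n := by omega
        have hthis := h j ⟨cc, hcd⟩
        rw [vecMul_Mmat, if_pos (show cc < eN m n from hcc)] at hthis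
        exact hthis
      · intro j rr hrr
        have hcd : eN m n + rr < dN m n := by omega
        have hthis := h j ⟨eN m n + rr, hcd⟩
        rw [vecMul_Mmat, if_neg (show ¬ (eN m n + rr < eN m n) by omega),
          show eN m n + rr - eN m n = rr by omega] at hthis
        exact dvd_neg.mp hthis
    · rintro ⟨h1, h2⟩ j c
      rw [vecMul_Mmat]
      by_cases hc : (c : ℕ) < eN m n
      · rw [if_pos hc]; exact h1 j (c : ℕ) hc
      · rw [if_neg hc, dvd_neg]
        refine h2 j ((c:ℕ) - eN m n) ?_
        have := c.isLt
        omega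
  -- reformulate RHS vecMul
  have hkey : ∀ c : Fin n × Fin (eN m n),
      Matrix.vecMul
          (fun i : Fin (fN m n) => g ⟨eN m n + (i : ℕ), by have := i.isLt; simp only [dN]; omega⟩)
          (Matrix.of fun (rr : Fin (fN m n)) (jc : Fin n × Fin (eN m n)) =>
            π ^ (r - ν ((jc.1 : ℕ) + 1)) * Bmat m n (fun i => α i jc.1) rr jc.2) c
      = π ^ (r - ν ((c.1:ℕ)+1)) *
          ∑ k ∈ Finset.range (fN m n),
            pad g (eN m n + k) * Bent n m (pad fun i => α i c.1) k (c.2 : ℕ) := by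
    intro c
    have h0 : Matrix.vecMul
          (fun i : Fin (fN m n) => g ⟨eN m n + (i : ℕ), by have := i.isLt; simp only [dN]; omega⟩)
          (Matrix.of fun (rr : Fin (fN m n)) (jc : Fin n × Fin (eN m n)) =>
            π ^ (r - ν ((jc.1 : ℕ) + 1)) * Bmat m n (fun i => α i jc.1) rr jc.2) c
        = ∑ i : Fin (fN m n),
            (g ⟨eN m n + (i : ℕ), by have := i.isLt; simp only [dN]; omega⟩)
            * (π ^ (r - ν ((c.1 : ℕ) + 1)) * Bmat m n (fun i => α i c.1) i c.2) := by
      simp [Matrix.vecMul, dotProduct]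
    set G : ℕ → 𝔬 := fun k =>
      π ^ (r - ν ((c.1:ℕ)+1)) * (pad g (eN m n + k) * Bent n m (pad fun i => α i c.1) k (c.2 : ℕ))
      with hG
    have h1 : ∀ i : Fin (fN m n),
        (g ⟨eN m n + (i : ℕ), by have := i.isLt; simp only [dN]; omega⟩)
          * (π ^ (r - ν ((c.1 : ℕ) + 1)) * Bmat m n (fun i => α i c.1) i c.2) = G (i : ℕ) := by
      intro i
      rw [hG]
      have hpg : pad g (eN m n + (i:ℕ))
          = g ⟨eN m n + (i : ℕ), by have := i.isLt; simp only [dN]; omega⟩ := by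
        apply dif_pos
      simp only [hpg]
      show _ = π ^ (r - ν ((c.1:ℕ)+1)) * (_ * Bent n m (pad fun i => α i c.1) (i:ℕ) (c.2 : ℕ))
      rw [show Bmat m n (fun i => α i c.1) i c.2
          = Bent n m (pad fun i => α i c.1) (i:ℕ) (c.2 : ℕ) from rfl]
      ring
    rw [h0, Finset.sum_congr rfl (fun i _ => h1 i), Fin.sum_univ_eq_sum_range G (fN m n),
      hG, ← Finset.mul_sum]
  constructor
  · intro h
    obtain ⟨hA1, hA2⟩ := hLHS.mp h
    have jl : Fin n := ⟨n-1, by omega⟩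
    have hg1 : ∀ cc, cc < eN m n → π ^ r ∣ pad g cc := by
      apply modpt hprime n m (pad fun i => α i (⟨n-1, by omega⟩ : Fin n)) (pad g)
        (hcol ⟨n-1, by omega⟩) r
      intro rr hrr
      have hthis := hA2 ⟨n-1, by omega⟩ rr hrr
      rw [show ((⟨n-1, by omega⟩ : Fin n) : ℕ) + 1 = n by simp; omega, hνn] at hthis
      have hcomm : ∑ k ∈ Finset.range (eN m n),
            Bent n m (pad fun i => α i (⟨n-1, by omega⟩ : Fin n)) rr k * pad g k
          = ∑ k ∈ Finset.range (eN m n),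
            pad g k * Bent n m (pad fun i => α i (⟨n-1, by omega⟩ : Fin n)) rr k :=
        Finset.sum_congr rfl (fun k _ => mul_comm _ _)
      rw [hcomm]
      exact hthis
    refine ⟨?_, ?_⟩
    · intro c hc
      have := hg1 (c : ℕ) hc
      rwa [pad_coe g c] at this
    · intro c
      rw [hkey c]
      exact (hpoweq ((c.1:ℕ)+1) _).mpr (hA1 c.1 (c.2:ℕ) c.2.isLt)
  · rintro ⟨hg1, hg2⟩
    apply hLHS.mpr
    constructor
    · intro j cc hcc
      have hthis := hg2 (j, ⟨cc, hcc⟩)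
      rw [hkey (j, ⟨cc, hcc⟩)] at hthis
      exact (hpoweq ((j:ℕ)+1) _).mp hthis
    · intro j rr hrr
      apply Finset.dvd_sum
      intro k hk
      rw [Finset.mem_range] at hk
      have hkd : k < dN m n := by omega
      have hdg : π ^ ν ((j:ℕ)+1) ∣ pad g k := by
        have h1 := hg1 ⟨k, hkd⟩ hk
        have h2 : pad g k = g ⟨k, hkd⟩ := dif_pos hkd
        rw [h2]
        exact dvd_trans (pow_dvd_pow π (hνle _)) h1
      exact hdg.mul_right _
end

section
/- Let m, n ≥ 1 be integers and define, in the field ℚ(X,T) of rational functions in two variables over ℚ, W_{m,n}(X,T) = [∑_{w∈Sₙ} X^{−ℓ(w)} ∏_{j∈Des(w)} X^{a_{n−j}(m,n)} T^{b_{n−j}(m,n)}] / [∏_{i=0}^{d(m,n)−1}(1 − X^i T) · ∏_{i=0}^{n−1}(1 − X^{a_i(m,n)} T^{b_i(m,n)})]. Then, under the ℚ-field automorphism of ℚ(X,T) sending X ↦ X^{−1} and T ↦ T^{−1}, one has W_{m,n}(X^{−1}, T^{−1}) = (−1)^{h(m,n)} X^{h(m,n)(h(m,n)−1)/2} T^{d(m,n)+h(m,n)}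 · W_{m,n}(X,T). -/
open scoped BigOperators

/-- `a_i(m,n) = (n-i)(i+d(m,n))`. -/
def aN (m n i : ℕ) : ℕ := (n - i) * (i + dN m n)

/-- `b_i(m,n) = n - i + e(m,n) + ∑_{j=i+1}^n e(m,j)`. -/
def bN (m n i : ℕ) : ℕ := n - i + eN m n + ∑ j ∈ Finset.Icc (i + 1) n, eN m j

/-- The values of `w ∈ Sₙ` as a function on `{0,…,n-1}` (0-based), extended by the
identity outside this range. -/
def permVal {n : ℕ} (w : Equiv.Perm (Fin n)) (t : ℕ) : ℕ :=
  if h : t < n then (w ⟨t, h⟩ : ℕ) else t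

/-- `ℓ(w)`, the number of inversions (Coxeter length) of `w ∈ Sₙ`. -/
def lenP {n : ℕ} (w : Equiv.Perm (Fin n)) : ℕ :=
  ((Finset.range n ×ˢ Finset.range n).filter fun p =>
    p.1 < p.2 ∧ permVal w p.2 < permVal w p.1).card

/-- `Des(w) = {i ∈ {1,…,n-1} : w(i+1) < w(i)}`, the descent set of `w ∈ Sₙ`
(in 1-based positions). -/
def desP {n : ℕ} (w : Equiv.Perm (Fin n)) : Finset ℕ :=
  (Finset.Icc 1 (n - 1)).filter fun j => permVal w j < permVal w (j - 1)

/-- The rational expression `W_{m,n}(x,t)`, evaluated at elements `x`, `t` of a field. -/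
noncomputable def Wfun (m n : ℕ) {K : Type*} [Field K] (x t : K) : K :=
  (∑ w : Equiv.Perm (Fin n),
      (x ^ lenP w)⁻¹ * ∏ j ∈ desP w, x ^ aN m n (n - j) * t ^ bN m n (n - j)) /
    ((∏ i ∈ Finset.range (dN m n), (1 - x ^ i * t)) *
      ∏ i ∈ Finset.range n, (1 - x ^ aN m n i * t ^ bN m n i))

/-- The variable `X` in the rational function field `ℚ(X,T)`. -/
noncomputable def Xvar : FractionRing (MvPolynomial (Fin 2) ℚ) :=
  algebraMap (MvPolynomial (Fin 2) ℚ) (FractionRing (MvPolynomial (Fin 2) ℚ))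
    (MvPolynomial.X 0)

/-- The variable `T` in the rational function field `ℚ(X,T)`. -/
noncomputable def Tvar : FractionRing (MvPolynomial (Fin 2) ℚ) :=
  algebraMap (MvPolynomial (Fin 2) ℚ) (FractionRing (MvPolynomial (Fin 2) ℚ))
    (MvPolynomial.X 1)


section Aux

open Finset

lemma Xvar_ne : Xvar ≠ 0 := by
  intro h
  have h2 : (MvPolynomial.X 0 : MvPolynomial (Fin 2) ℚ) = 0 :=
    IsFractionRing.injective (MvPolynomial (Fin 2) ℚ) (FractionRing (MvPolynomial (Fin 2) ℚ))
      (by simpa [Xvar] using h)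
  have := congrArg (MvPolynomial.eval (fun _ => (1:ℚ))) h2
  simp at this

lemma Tvar_ne : Tvar ≠ 0 := by
  intro h
  have h2 : (MvPolynomial.X 1 : MvPolynomial (Fin 2) ℚ) = 0 :=
    IsFractionRing.injective (MvPolynomial (Fin 2) ℚ) (FractionRing (MvPolynomial (Fin 2) ℚ))
      (by simpa [Tvar] using h)
  have := congrArg (MvPolynomial.eval (fun _ => (1:ℚ))) h2
  simp at this

lemma mon_ne (p q : ℕ) (hq : 1 ≤ q) :
    (1 : FractionRing (MvPolynomial (Fin 2) ℚ)) - Xvar ^ p * Tvar ^ q ≠ 0 := by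
  intro h
  have h1 : Xvar ^ p * Tvar ^ q = 1 := by linear_combination -h
  have h2 : (MvPolynomial.X 0 : MvPolynomial (Fin 2) ℚ) ^ p * MvPolynomial.X 1 ^ q = 1 := by
    apply IsFractionRing.injective (MvPolynomial (Fin 2) ℚ) (FractionRing (MvPolynomial (Fin 2) ℚ))
    simpa [Xvar, Tvar, map_mul, map_pow] using h1
  have := congrArg (MvPolynomial.eval (fun i : Fin 2 => if i = 0 then (1:ℚ) else 0)) h2
  simp [zero_pow (by omega : q ≠ 0)] at this

lemma prod_flip {K : Type*} [Field K] (x t : K) (hx : x ≠ 0) (ht : t ≠ 0)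
    (S : Finset ℕ) (p q : ℕ → ℕ) :
    (∏ i ∈ S, (1 - (x⁻¹) ^ p i * (t⁻¹) ^ q i)) * (x ^ (∑ i ∈ S, p i) * t ^ (∑ i ∈ S, q i))
      = (-1) ^ S.card * ∏ i ∈ S, (1 - x ^ p i * t ^ q i) := by
  rw [← Finset.prod_pow_eq_pow_sum, ← Finset.prod_pow_eq_pow_sum, ← Finset.prod_mul_distrib,
    ← Finset.prod_mul_distrib]
  rw [← Finset.prod_const (-1 : K), ← Finset.prod_mul_distrib]
  refine Finset.prod_congr rfl fun i _ => ?_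
  have hxp : x ^ p i ≠ 0 := pow_ne_zero _ hx
  have htq : t ^ q i ≠ 0 := pow_ne_zero _ ht
  field_simp
  have ha : (1 / x) ^ p i * x ^ p i = 1 := by rw [div_pow, one_pow, one_div, inv_mul_cancel₀ hxp]
  have hb : (1 / t) ^ q i * t ^ q i = 1 := by rw [div_pow, one_pow, one_div, inv_mul_cancel₀ htq]
  linear_combination (-((1 / t) ^ q i * t ^ q i)) * ha - hb

def Pn (n : ℕ) : Finset (ℕ × ℕ) := (Finset.range n ×ˢ Finset.range n).filter fun p => p.1 < p.2

lemma card_Pn (n : ℕ) : (Pn n).card = n.choose 2 := by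
  rw [Pn, Finset.card_filter, Finset.sum_product]
  have h1 : ∀ i ∈ Finset.range n, (∑ j ∈ Finset.range n, if i < j then (1:ℕ) else 0) = n - 1 - i := by
    intro i hi
    rw [← Finset.card_filter]
    have : (Finset.range n).filter (fun j => i < j) = Finset.Ico (i+1) n := by
      ext j; simp only [Finset.mem_filter, Finset.mem_range, Finset.mem_Ico]; omega
    rw [this, Nat.card_Ico]; omega
  rw [Finset.sum_congr rfl h1, Finset.sum_range_reflect (fun i => i) n, Finset.sum_range_id,
    Nat.choose_two_right]

lemma lenP_eq {n : ℕ} (w : Equiv.Perm (Fin n)) :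
    lenP w = ((Pn n).filter fun p => permVal w p.2 < permVal w p.1).card := by
  rw [lenP, Pn, Finset.filter_filter]

lemma permVal_lt {n : ℕ} (w : Equiv.Perm (Fin n)) {t : ℕ} (h : t < n) : permVal w t < n := by
  rw [permVal, dif_pos h]; exact (w ⟨t, h⟩).isLt

lemma permVal_rev {n : ℕ} (w : Equiv.Perm (Fin n)) {t : ℕ} (h : t < n) :
    permVal (Fin.revPerm * w) t = n - (permVal w t + 1) := by
  rw [permVal, permVal, dif_pos h, dif_pos h]
  exact Fin.val_rev _

lemma permVal_inj {n : ℕ} (w : Equiv.Perm (Fin n)) {s t : ℕ} (hs : s < n) (ht : t < n)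
    (hne : s ≠ t) : permVal w s ≠ permVal w t := by
  rw [permVal, permVal, dif_pos hs, dif_pos ht]
  intro h
  exact hne (by simpa using congrArg Fin.val (w.injective (Fin.ext h)))

lemma filter_rev {n : ℕ} (w : Equiv.Perm (Fin n)) :
    ((Pn n).filter fun p => permVal (Fin.revPerm * w) p.2 < permVal (Fin.revPerm * w) p.1)
      = Pn n \ ((Pn n).filter fun p => permVal w p.2 < permVal w p.1) := by
  ext p
  simp only [Finset.mem_filter, Finset.mem_sdiff, and_congr_right_iff, not_and]
  intro hp
  have hp' := hp
  rw [Pn, Finset.mem_filter, Finset.mem_product, Finset.mem_range, Finset.mem_range] at hp'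
  obtain ⟨⟨h1, h2⟩, h12⟩ := hp'
  have e1 := permVal_rev w h1
  have e2 := permVal_rev w h2
  have l1 := permVal_lt w h1
  have l2 := permVal_lt w h2
  have hne := permVal_inj w h1 h2 (Nat.ne_of_lt h12)
  constructor
  · intro h _; omega
  · intro h; have := h hp; omega

lemma lenP_le {n : ℕ} (w : Equiv.Perm (Fin n)) : lenP w ≤ n.choose 2 := by
  rw [lenP_eq, ← card_Pn]; exact Finset.card_filter_le _ _

lemma lenP_rev {n : ℕ} (w : Equiv.Perm (Fin n)) :
    lenP (Fin.revPerm * w) = n.choose 2 - lenP w := by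
  rw [lenP_eq, filter_rev, Finset.card_sdiff_of_subset (Finset.filter_subset _ _), card_Pn, ← lenP_eq]

lemma desP_rev {n : ℕ} (hn : 1 ≤ n) (w : Equiv.Perm (Fin n)) :
    desP (Fin.revPerm * w) = Finset.Icc 1 (n - 1) \ desP w := by
  ext j
  simp only [desP, Finset.mem_filter, Finset.mem_sdiff, and_congr_right_iff, not_and,
    Finset.mem_Icc]
  rintro ⟨hj1, hj2⟩
  have hjn : j < n := by omega
  have hjn' : j - 1 < n := by omega
  have e1 := permVal_rev w hjn
  have e2 := permVal_rev w hjn'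
  have l1 := permVal_lt w hjn
  have l2 := permVal_lt w hjn'
  have hne := permVal_inj w hjn hjn' (by omega)
  constructor
  · intro h _; omega
  · intro h; have := h ⟨hj1, hj2⟩; omega

lemma Icc_eq_Ico (a b c : ℕ) (h : b + 1 = c) : Finset.Icc a b = Finset.Ico a c := by
  ext k; simp only [Finset.mem_Icc, Finset.mem_Ico]; omega

lemma sum_eN (m n : ℕ) (hm : 1 ≤ m) (hn : 1 ≤ n) :
    ∑ j ∈ Finset.Icc 1 n, eN m j = fN m n := by
  have h1 : ∀ j ∈ Finset.Icc 1 n, eN m j = (j + m - 2).choose (m - 1) := by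
    intro j hj
    rw [Finset.mem_Icc] at hj
    rw [eN]
    have : j - 1 = (j + m - 2) - (m - 1) := by omega
    rw [this, Nat.choose_symm (by omega)]
  rw [Finset.sum_congr rfl h1]
  rw [Icc_eq_Ico 1 n (n+1) rfl, Finset.sum_Ico_eq_sum_range]
  have h3 : ∀ i ∈ Finset.range (n + 1 - 1), (1 + i + m - 2).choose (m - 1) = (i + (m-1)).choose (m-1) := by
    intro i _; congr 1; omega
  rw [Finset.sum_congr rfl h3]
  have h4 : ∑ i ∈ Finset.range (n + 1 - 1), (i + (m-1)).choose (m-1)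
      = ∑ k ∈ Finset.Icc (m-1) (n - 1 + (m-1)), k.choose (m-1) := by
    rw [Icc_eq_Ico (m-1) (n-1+(m-1)) (n+(m-1)) (by omega), Finset.sum_Ico_eq_sum_range]
    apply Finset.sum_congr (by congr 1; omega)
    intro i _; congr 1; omega
  rw [h4, Nat.sum_Icc_choose, fN]
  have : n - 1 + (m - 1) + 1 = n + m - 1 := by omega
  rw [this]
  have : n - 1 = (n + m - 1) - (m - 1 + 1) := by omega
  rw [this, Nat.choose_symm (by omega)]

lemma choose_two_succ (j : ℕ) : (j+1).choose 2 = j.choose 2 + j := by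
  rw [Nat.choose_succ_succ, Nat.choose_one_right, Nat.succ_eq_add_one]; norm_num; omega

lemma choose_two_add (p q : ℕ) : p.choose 2 + q.choose 2 + p * q = (p + q).choose 2 := by
  induction q with
  | zero => simp
  | succ k ih =>
    have h1 := choose_two_succ k
    have h2 : (p + (k+1)).choose 2 = (p+k).choose 2 + (p+k) := by
      rw [show p + (k+1) = (p+k)+1 by ring]; exact choose_two_succ _
    have h3 : p * (k+1) = p * k + p := by ring
    omega

lemma sum_split {M : Type*} [AddCommMonoid M] (n : ℕ) (hn : 1 ≤ n) (F : ℕ → M) :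
    ∑ i ∈ Finset.range n, F i = F 0 + ∑ j ∈ Finset.Icc 1 (n-1), F j := by
  rw [Icc_eq_Ico 1 (n-1) n (by omega), Finset.range_eq_Ico,
    ← Finset.sum_Ico_consecutive _ (Nat.zero_le 1) hn]
  congr 1
  simp

lemma sum_reflect {M : Type*} [AddCommMonoid M] (n : ℕ) (F : ℕ → M) :
    ∑ j ∈ Finset.Icc 1 (n-1), F (n - j) = ∑ i ∈ Finset.Icc 1 (n-1), F i := by
  apply Finset.sum_nbij' (fun j => n - j) (fun j => n - j)
  all_goals intro a ha
  all_goals simp only [Finset.mem_Icc] at *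
  all_goals omega

lemma numer_flip (m n : ℕ) (hn : 1 ≤ n) {K : Type*} [Field K] (x t : K)
    (hx : x ≠ 0) (ht : t ≠ 0) :
    (∑ w : Equiv.Perm (Fin n),
        ((x⁻¹) ^ lenP w)⁻¹ * ∏ j ∈ desP w, (x⁻¹) ^ aN m n (n - j) * (t⁻¹) ^ bN m n (n - j))
      * (x ^ (∑ j ∈ Finset.Icc 1 (n-1), aN m n (n - j))
        * t ^ (∑ j ∈ Finset.Icc 1 (n-1), bN m n (n - j)))
    = x ^ n.choose 2 * ∑ w : Equiv.Perm (Fin n),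
        (x ^ lenP w)⁻¹ * ∏ j ∈ desP w, x ^ aN m n (n - j) * t ^ bN m n (n - j) := by
  rw [Finset.sum_mul, Finset.mul_sum]
  refine Fintype.sum_equiv (Equiv.mulLeft (Fin.revPerm : Equiv.Perm (Fin n))) _ _ fun w => ?_
  simp only [Equiv.coe_mulLeft]
  have hsub : desP w ⊆ Finset.Icc 1 (n-1) := Finset.filter_subset _ _
  rw [desP_rev hn w, lenP_rev w, inv_pow, inv_inv, pow_sub₀ x hx (lenP_le w)]
  have e2 : ∏ j ∈ desP w,
      ((x⁻¹) ^ aN m n (n - j) * (t⁻¹) ^ bN m n (n - j))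
      = (∏ j ∈ desP w, (x ^ aN m n (n - j) * t ^ bN m n (n - j)))⁻¹ := by
    rw [← Finset.prod_inv_distrib]
    exact Finset.prod_congr rfl fun j _ => by rw [inv_pow, inv_pow, mul_inv]
  rw [e2]
  have e3 : x ^ (∑ j ∈ Finset.Icc 1 (n-1), aN m n (n - j))
      * t ^ (∑ j ∈ Finset.Icc 1 (n-1), bN m n (n - j))
      = ∏ j ∈ Finset.Icc 1 (n-1), (x ^ aN m n (n - j) * t ^ bN m n (n - j)) := by
    rw [Finset.prod_mul_distrib, Finset.prod_pow_eq_pow_sum, Finset.prod_pow_eq_pow_sum]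
  rw [e3, ← Finset.prod_sdiff hsub]
  have hP : (∏ j ∈ desP w, (x ^ aN m n (n - j) * t ^ bN m n (n - j))) ≠ 0 :=
    Finset.prod_ne_zero_iff.2 fun j _ => mul_ne_zero (pow_ne_zero _ hx) (pow_ne_zero _ ht)
  have hxl : (x : K) ^ lenP w ≠ 0 := pow_ne_zero _ hx
  have hxc : (x : K) ^ n.choose 2 ≠ 0 := pow_ne_zero _ hx
  field_simp

lemma assemble {K : Type*} [Field K] (Nv P1v P2v Nf Q1 Q2 u1 u2 u3 c s1 s2 xC : K)
    (hu1 : u1 ≠ 0) (hu2 : u2 ≠ 0) (hu3 : u3 ≠ 0) (hQ1 : Q1 ≠ 0) (hQ2 : Q2 ≠ 0)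
    (hP1 : P1v ≠ 0) (hP2 : P2v ≠ 0)
    (E1 : P1v * u1 = s1 * Q1) (E2 : P2v * u2 = s2 * Q2) (E3 : Nv * u3 = xC * Nf)
    (ES : xC * (u1 * u2) = c * (s1 * (s2 * u3))) :
    Nv / (P1v * P2v) = c * (Nf / (Q1 * Q2)) := by
  have key : Nv * (Q1 * Q2) * (u1 * u2 * u3) = (c * Nf * (P1v * P2v)) * (u1 * u2 * u3) := by
    linear_combination (Q1*Q2*u1*u2) * E3 + (Nf*Q1*Q2) * ES - (c*s2*u3*Nf*Q2) * E1
      - (c*u3*Nf*P1v*u1) * E2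
  have keyc := mul_right_cancel₀ (mul_ne_zero (mul_ne_zero hu1 hu2) hu3) key
  rw [← mul_div_assoc, div_eq_div_iff (mul_ne_zero hP1 hP2) (mul_ne_zero hQ1 hQ2)]
  linear_combination keyc

end Aux

theorem stmt12 (m n : ℕ) (hm : 1 ≤ m) (hn : 1 ≤ n) :
    Wfun m n Xvar⁻¹ Tvar⁻¹ =
      (-1) ^ hN m n * Xvar ^ (hN m n * (hN m n - 1) / 2) * Tvar ^ (dN m n + hN m n) *
        Wfun m n Xvar Tvar := by
  have hx : Xvar ≠ 0 := Xvar_ne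
  have ht : Tvar ≠ 0 := Tvar_ne
  rw [Wfun, Wfun]
  -- nat facts
  have hA : (∑ i ∈ Finset.range n, aN m n i)
      = aN m n 0 + ∑ j ∈ Finset.Icc 1 (n-1), aN m n (n - j) := by
    rw [sum_split n hn (aN m n)]
    congr 1
    exact (sum_reflect n (aN m n)).symm
  have hB : (∑ i ∈ Finset.range n, bN m n i)
      = bN m n 0 + ∑ j ∈ Finset.Icc 1 (n-1), bN m n (n - j) := by
    rw [sum_split n hn (bN m n)]
    congr 1
    exact (sum_reflect n (bN m n)).symm
  have hb0 : bN m n 0 = hN m n := by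
    simp only [bN, Nat.sub_zero, Nat.zero_add, hN, dN]
    rw [sum_eN m n hm hn]
    omega
  have hS1 : ∑ i ∈ Finset.range (dN m n), i = (dN m n).choose 2 := by
    rw [Finset.sum_range_id, Nat.choose_two_right]
  have h5 : hN m n = n + dN m n := by simp only [hN]; omega
  have h4 : hN m n * (hN m n - 1) / 2 = (n + dN m n).choose 2 := by
    rw [h5, Nat.choose_two_right]
  have h3 : n.choose 2 + (dN m n).choose 2 + aN m n 0 = (n + dN m n).choose 2 := by
    rw [show aN m n 0 = n * dN m n by simp [aN]]
    exact choose_two_add n (dN m n)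
  have hexpx : n.choose 2 + ((∑ i ∈ Finset.range (dN m n), i) + (∑ i ∈ Finset.range n, aN m n i))
      = hN m n * (hN m n - 1) / 2 + (∑ j ∈ Finset.Icc 1 (n-1), aN m n (n - j)) := by
    omega
  have hexpt : dN m n + (∑ i ∈ Finset.range n, bN m n i)
      = (dN m n + hN m n) + (∑ j ∈ Finset.Icc 1 (n-1), bN m n (n - j)) := by
    omega
  -- flips
  have E1 := prod_flip Xvar Tvar hx ht (Finset.range (dN m n)) (fun i => i) (fun _ => 1)
  simp only [pow_one, Finset.sum_const, smul_eq_mul, mul_one, Finset.card_range] at E1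
  have E2 := prod_flip Xvar Tvar hx ht (Finset.range n) (aN m n) (bN m n)
  rw [Finset.card_range] at E2
  have E3 := numer_flip m n hn Xvar Tvar hx ht
  -- sign fact
  have hsign : ((-1 : FractionRing (MvPolynomial (Fin 2) ℚ))) ^ hN m n
      * ((-1) ^ dN m n * (-1) ^ n) = 1 := by
    rw [← pow_add, ← pow_add]
    simp only [hN]
    exact Even.neg_one_pow ⟨dN m n + n, by ring⟩
  have ES : Xvar ^ n.choose 2 *
      ((Xvar ^ (∑ i ∈ Finset.range (dN m n), i) * Tvar ^ dN m n) *
        (Xvar ^ (∑ i ∈ Finset.range n, aN m n i) * Tvar ^ (∑ i ∈ Finset.range n, bN m n i)))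
      = ((-1) ^ hN m n * Xvar ^ (hN m n * (hN m n - 1) / 2) * Tvar ^ (dN m n + hN m n)) *
        ((-1) ^ dN m n * ((-1) ^ n *
          (Xvar ^ (∑ j ∈ Finset.Icc 1 (n-1), aN m n (n - j))
            * Tvar ^ (∑ j ∈ Finset.Icc 1 (n-1), bN m n (n - j))))) := by
    have ex : Xvar ^ n.choose 2 * (Xvar ^ (∑ i ∈ Finset.range (dN m n), i)
        * Xvar ^ (∑ i ∈ Finset.range n, aN m n i))
        = Xvar ^ (hN m n * (hN m n - 1) / 2)
          * Xvar ^ (∑ j ∈ Finset.Icc 1 (n-1), aN m n (n - j)) := by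
      rw [← pow_add, ← pow_add, ← pow_add, hexpx]
    have et : Tvar ^ dN m n * Tvar ^ (∑ i ∈ Finset.range n, bN m n i)
        = Tvar ^ (dN m n + hN m n) * Tvar ^ (∑ j ∈ Finset.Icc 1 (n-1), bN m n (n - j)) := by
      rw [← pow_add, ← pow_add, hexpt]
    calc Xvar ^ n.choose 2 *
        ((Xvar ^ (∑ i ∈ Finset.range (dN m n), i) * Tvar ^ dN m n) *
          (Xvar ^ (∑ i ∈ Finset.range n, aN m n i) * Tvar ^ (∑ i ∈ Finset.range n, bN m n i)))
        = (Xvar ^ n.choose 2 * (Xvar ^ (∑ i ∈ Finset.range (dN m n), i)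
            * Xvar ^ (∑ i ∈ Finset.range n, aN m n i)))
          * (Tvar ^ dN m n * Tvar ^ (∑ i ∈ Finset.range n, bN m n i)) := by ring
      _ = (Xvar ^ (hN m n * (hN m n - 1) / 2)
            * Xvar ^ (∑ j ∈ Finset.Icc 1 (n-1), aN m n (n - j)))
          * (Tvar ^ (dN m n + hN m n)
            * Tvar ^ (∑ j ∈ Finset.Icc 1 (n-1), bN m n (n - j))) := by rw [ex, et]
      _ = _ := by
          linear_combination -(Xvar ^ (hN m n * (hN m n - 1) / 2)
            * Xvar ^ (∑ j ∈ Finset.Icc 1 (n-1), aN m n (n - j))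
            * Tvar ^ (dN m n + hN m n)
            * Tvar ^ (∑ j ∈ Finset.Icc 1 (n-1), bN m n (n - j))) * hsign
  -- nonvanishing
  have hQ1 : (∏ i ∈ Finset.range (dN m n), (1 - Xvar ^ i * Tvar)) ≠ 0 :=
    Finset.prod_ne_zero_iff.2 fun i _ => by simpa using mon_ne i 1 le_rfl
  have hQ2 : (∏ i ∈ Finset.range n, (1 - Xvar ^ aN m n i * Tvar ^ bN m n i)) ≠ 0 := by
    refine Finset.prod_ne_zero_iff.2 fun i hi => mon_ne _ _ ?_
    have := Finset.mem_range.1 hi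
    simp only [bN]
    omega
  have hu1 : (Xvar ^ (∑ i ∈ Finset.range (dN m n), i) * Tvar ^ dN m n) ≠ 0 :=
    mul_ne_zero (pow_ne_zero _ hx) (pow_ne_zero _ ht)
  have hu2 : (Xvar ^ (∑ i ∈ Finset.range n, aN m n i)
      * Tvar ^ (∑ i ∈ Finset.range n, bN m n i)) ≠ 0 :=
    mul_ne_zero (pow_ne_zero _ hx) (pow_ne_zero _ ht)
  have hu3 : (Xvar ^ (∑ j ∈ Finset.Icc 1 (n-1), aN m n (n - j))
      * Tvar ^ (∑ j ∈ Finset.Icc 1 (n-1), bN m n (n - j))) ≠ 0 :=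
    mul_ne_zero (pow_ne_zero _ hx) (pow_ne_zero _ ht)
  have hne1 : ((-1 : FractionRing (MvPolynomial (Fin 2) ℚ))) ^ dN m n ≠ 0 :=
    pow_ne_zero _ (neg_ne_zero.2 one_ne_zero)
  have hne2 : ((-1 : FractionRing (MvPolynomial (Fin 2) ℚ))) ^ n ≠ 0 :=
    pow_ne_zero _ (neg_ne_zero.2 one_ne_zero)
  have hP1 : (∏ i ∈ Finset.range (dN m n), (1 - Xvar⁻¹ ^ i * Tvar⁻¹)) ≠ 0 := by
    intro h0
    rw [h0, zero_mul] at E1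
    exact (mul_ne_zero hne1 hQ1) E1.symm
  have hP2 : (∏ i ∈ Finset.range n, (1 - Xvar⁻¹ ^ aN m n i * Tvar⁻¹ ^ bN m n i)) ≠ 0 := by
    intro h0
    rw [h0, zero_mul] at E2
    exact (mul_ne_zero hne2 hQ2) E2.symm
  exact assemble _ _ _ _ _ _ _ _ _ _ _ _ _ hu1 hu2 hu3 hQ1 hQ2 hP1 hP2 E1 E2 E3 ES
end

section
/- Let m, n ≥ 1 be integers and set d = d(m,n), h = h(m,n), and for i = 0,…,n−1, a_i = a_i(m,n), b_i = b_i(m,n). Define the topological ideal zeta function ζ_top(s) = n! / (∏_{j=0}^{d−1}(s−j) · ∏_{i=0}^{n−1}(b_i s − a_i)) for real s where the denominator is nonzero. Then s·ζ_top(s) tends to (−1)^{h−1}/(h−1)! as s tends to 0; i.e., ζ_top has a simple pole at s = 0 with residue (−1)^{h(m,n)−1}/(h(m,n)−1)!. -/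
open scoped BigOperators

/-- The topological ideal zeta function `ζ^◁_{L_{m,n},top}(s)`. -/
noncomputable def zetaTop (m n : ℕ) (s : ℝ) : ℝ :=
  (n.factorial : ℝ) /
    ((∏ j ∈ Finset.range (dN m n), (s - (j : ℝ))) *
      ∏ i ∈ Finset.range n, ((bN m n i : ℝ) * s - (aN m n i : ℝ)))

lemma prod_add_eq_ascFactorial (d k : ℕ) :
    ∏ i ∈ Finset.range k, (d + i) = d.ascFactorial k := by
  induction k with
  | zero => simp
  | succ k ih => rw [Finset.prod_range_succ, ih, Nat.ascFactorial_succ, mul_comm]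

theorem stmt17 (m n : ℕ) (hm : 1 ≤ m) (hn : 1 ≤ n) :
    Filter.Tendsto (fun s : ℝ => s * zetaTop m n s)
      (nhdsWithin 0 {(0 : ℝ)}ᶜ)
      (nhds ((-1) ^ (hN m n - 1) / ((hN m n - 1).factorial : ℝ))) := by
  have hd1 : 1 ≤ dN m n := by
    have : 0 < eN m n := Nat.choose_pos (by omega)
    unfold dN; omega
  set d := dN m n with hdd
  -- the reduced denominator
  set R : ℝ → ℝ := fun s =>
    (∏ j ∈ Finset.Ico 1 d, (s - (j : ℝ))) *
      ∏ i ∈ Finset.range n, ((bN m n i : ℝ) * s - (aN m n i : ℝ)) with hR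
  have hsplit : ∀ s : ℝ, (∏ j ∈ Finset.range d, (s - (j : ℝ)))
      = s * ∏ j ∈ Finset.Ico 1 d, (s - (j : ℝ)) := by
    intro s
    rw [Finset.prod_range_eq_mul_Ico _ hd1]
    norm_num
  -- value of R at 0
  have haprod : (∏ i ∈ Finset.range n, aN m n i) = n.factorial * d.ascFactorial n := by
    have h1 : (∏ i ∈ Finset.range n, (n - i)) = n.factorial := by
      have := Finset.prod_range_reflect (fun i => i + 1) n
      have h2 : ∀ j ∈ Finset.range n, (fun i => i + 1) (n - 1 - j) = n - j := by
        intro j hj; simp only []; have := Finset.mem_range.mp hj; omega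
      rw [Finset.prod_congr rfl h2] at this
      rw [this, Finset.prod_range_add_one_eq_factorial]
    have h2 : (∏ i ∈ Finset.range n, (i + d)) = d.ascFactorial n := by
      rw [← prod_add_eq_ascFactorial]
      exact Finset.prod_congr rfl fun i _ => by omega
    unfold aN
    rw [Finset.prod_mul_distrib, h1, h2]
  have hfac : (d - 1).factorial * (n.factorial * d.ascFactorial n)
      = n.factorial * (hN m n - 1).factorial := by
    have h3 := Nat.factorial_mul_ascFactorial' d n (by omega)
    have h4 : hN m n - 1 = d + n - 1 := by unfold hN; omega
    rw [h4, ← h3]; ring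
  have hR0 : R 0 = (-1) ^ (hN m n - 1) * (n.factorial * (hN m n - 1).factorial : ℕ) := by
    have hc1 : (∏ j ∈ Finset.Ico 1 d, ((0 : ℝ) - (j : ℝ)))
        = (-1) ^ (d - 1) * ((d - 1).factorial : ℕ) := by
      have : ∀ j ∈ Finset.Ico 1 d, (0 : ℝ) - (j : ℝ) = (-1) * (j : ℝ) := by
        intro j _; ring
      rw [Finset.prod_congr rfl this, Finset.prod_mul_distrib, Finset.prod_const,
        Nat.card_Ico]
      congr 1
      rw [← Nat.cast_prod]
      congr 1
      have hdeq : d = (d - 1) + 1 := by omega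
      rw [hdeq, Finset.prod_Ico_id_eq_factorial]
      simp
    have hc2 : (∏ i ∈ Finset.range n, ((bN m n i : ℝ) * 0 - (aN m n i : ℝ)))
        = (-1) ^ n * ((∏ i ∈ Finset.range n, aN m n i : ℕ) : ℝ) := by
      have : ∀ i ∈ Finset.range n, (bN m n i : ℝ) * 0 - (aN m n i : ℝ)
          = (-1) * (aN m n i : ℝ) := by intro i _; ring
      rw [Finset.prod_congr rfl this, Finset.prod_mul_distrib, Finset.prod_const,
        Finset.card_range, Nat.cast_prod]
    show (∏ j ∈ Finset.Ico 1 d, ((0 : ℝ) - (j : ℝ))) *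
        ∏ i ∈ Finset.range n, ((bN m n i : ℝ) * 0 - (aN m n i : ℝ)) = _
    rw [hc1, hc2, haprod]
    have hpow : ((-1 : ℝ)) ^ (d - 1) * (-1) ^ n = (-1) ^ (hN m n - 1) := by
      rw [← pow_add]
      congr 1
      unfold hN; omega
    have hcast : ((d - 1).factorial : ℝ) * ((n.factorial * d.ascFactorial n : ℕ) : ℝ)
        = ((n.factorial * (hN m n - 1).factorial : ℕ) : ℝ) := by
      rw [← Nat.cast_mul]; exact_mod_cast congrArg (Nat.cast (R := ℝ)) hfac
    calc (-1 : ℝ) ^ (d - 1) * ((d - 1).factorial : ℕ) *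
          ((-1) ^ n * ((n.factorial * d.ascFactorial n : ℕ) : ℝ))
        = ((-1 : ℝ) ^ (d - 1) * (-1) ^ n) *
          (((d - 1).factorial : ℝ) * ((n.factorial * d.ascFactorial n : ℕ) : ℝ)) := by ring
      _ = _ := by rw [hpow, hcast]
  have hR0ne : R 0 ≠ 0 := by
    rw [hR0]
    positivity
  have hRcont : Continuous R := by
    apply Continuous.mul <;> exact continuous_finset_prod _ (fun i _ => by continuity)
  have htend : Filter.Tendsto (fun s : ℝ => (n.factorial : ℝ) / R s)
      (nhdsWithin 0 {(0 : ℝ)}ᶜ) (nhds ((n.factorial : ℝ) / R 0)) := by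
    apply Filter.Tendsto.mono_left _ nhdsWithin_le_nhds
    exact (tendsto_const_nhds.div (hRcont.tendsto 0) hR0ne)
  have hval : (n.factorial : ℝ) / R 0 = (-1) ^ (hN m n - 1) / ((hN m n - 1).factorial : ℝ) := by
    have hk : ((-1 : ℝ)) ^ (hN m n - 1) * (-1) ^ (hN m n - 1) = 1 := by
      rw [← pow_add, ← two_mul, pow_mul]; norm_num
    rw [hR0, div_eq_div_iff
      (mul_ne_zero (pow_ne_zero _ (by norm_num))
        (Nat.cast_ne_zero.mpr (by positivity)))
      (Nat.cast_ne_zero.mpr (Nat.factorial_ne_zero _))]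
    push_cast
    rw [← mul_assoc, hk, one_mul]
  rw [hval] at htend
  refine htend.congr' ?_
  filter_upwards [self_mem_nhdsWithin] with s hs
  have hs0 : s ≠ 0 := hs
  rw [zetaTop, hsplit s, mul_assoc, ← mul_div_assoc, mul_div_mul_left _ _ hs0]
end
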